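/- arXiv:0908.3392 — 2 statements merged into one kernel-verified Lean document; each statement's English description precedes it below -/
import Mathlib

section
/- Let k ≥ 1 and X ∈ 𝒳^{4k}_{η}, and let w₁ ≥ 2 and w₂ ≤ 1/2. Then there exists a numerical constant C_k > 0 depending only on k such that for every n ≥ 1: sup_{j≥1} P( λ̂_j/λ_j ≥ w₁ ) ≤ C_k·η·n^{−k} and sup_{j≥1} P( λ̂_j/λ_j < w₂ ) ≤ C_k·η·n^{−k}, where λ̂_j := n⁻¹Σ_{i=1}^n [Xᵢ]_j². -/
open Filter Real

noncomputable section

namespace CircularFLM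

/-- A circular functional linear model, described through the Fourier coefficients of the
regressor with respect to the trigonometric basis of `L²[0,1]` (indices `j ≥ 1`), together
with an infinite i.i.d. sequence of copies `(ε_i, X_i)` generating the sample
`(Y_i, X_i)` with `Y_i = ⟨β, X_i⟩ + σ ε_i`.  `Xc i j ω` is the `j`-th Fourier coefficient
`[X_i]_j` of the `i`-th copy of the regressor. -/
structure Model where
  Ω : Type
  [mΩ : MeasurableSpace Ω]
  P : MeasureTheory.Measure Ω
  [probP : MeasureTheory.IsProbabilityMeasure P]
  σ : ℝ
  σ_pos : 0 < σ
  /-- the eigenvalues `λ_j = E [X]_j²`, `j ≥ 1`, of the covariance operator -/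
  lam : ℕ → ℝ
  lam_pos : ∀ j, 1 ≤ j → 0 < lam j
  lam_tendsto_zero : Tendsto lam atTop (nhds (0 : ℝ))
  Xc : ℕ → ℕ → Ω → ℝ
  meas_Xc : ∀ i j, Measurable (Xc i j)
  eps : ℕ → Ω → ℝ
  meas_eps : ∀ i, Measurable (eps i)
  /-- `X` is centered -/
  Xc_centered : ∀ j, 1 ≤ j → ∫ ω, Xc 0 j ω ∂P = 0
  /-- second-order stationarity: the Fourier coefficients have variances `λ_j` ... -/
  Xc_var : ∀ j, 1 ≤ j → ∫ ω, (Xc 0 j ω) ^ 2 ∂P = lam j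
  /-- ... and are uncorrelated -/
  Xc_uncorr : ∀ j k, 1 ≤ j → 1 ≤ k → j ≠ k → ∫ ω, Xc 0 j ω * Xc 0 k ω ∂P = 0
  /-- `E‖X‖² < ∞` -/
  X_sq_int : MeasureTheory.Integrable (fun ω => ∑' j : ℕ, (Xc 0 (j + 1) ω) ^ 2) P
  /-- the error is centered with variance one ... -/
  eps_centered : ∫ ω, eps 0 ω ∂P = 0
  eps_var : ∫ ω, (eps 0 ω) ^ 2 ∂P = 1
  /-- ... and uncorrelated with the regressor -/
  eps_uncorr : ∀ j, 1 ≤ j → ∫ ω, eps 0 ω * Xc 0 j ω ∂P = 0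
  /-- the copies `(ε_i, X_i)` are independent ... -/
  iid_indep : ProbabilityTheory.iIndepFun
    (fun i ω => ((eps i ω : ℝ), fun j => Xc i j ω)) P
  /-- ... and identically distributed -/
  iid_ident : ∀ i : ℕ,
    MeasureTheory.Measure.map (fun ω => ((eps i ω : ℝ), fun j => Xc i j ω)) P
      = MeasureTheory.Measure.map (fun ω => ((eps 0 ω : ℝ), fun j => Xc 0 j ω)) P

open MeasureTheory ProbabilityTheory

attribute [instance] Model.mΩ Model.probP

/-- the response `Y_i = ⟨β, X_i⟩ + σ ε_i` for slope Fourier coefficients `b` -/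
def Model.Y (M : Model) (b : ℕ → ℝ) (i : ℕ) (ω : M.Ω) : ℝ :=
  (∑' j : ℕ, b (j + 1) * M.Xc i (j + 1) ω) + M.σ * M.eps i ω

/-- `σ_Y² = Var(Y)` -/
def Model.varY (M : Model) (b : ℕ → ℝ) : ℝ := variance (M.Y b 0) M.P

/-- `E‖X‖²` -/
def Model.EX2 (M : Model) : ℝ := ∫ ω, ∑' j : ℕ, (M.Xc 0 (j + 1) ω) ^ 2 ∂M.P

/-- `X ∈ 𝒳ᵏ_η`, i.e. `sup_j E|[X]_j/√λ_j|ᵏ ≤ η` -/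
def Model.momX (M : Model) (k : ℕ) (η : ℝ) : Prop :=
  ∀ j, 1 ≤ j → Integrable (fun ω => |M.Xc 0 j ω / Real.sqrt (M.lam j)| ^ k) M.P ∧
    ∫ ω, |M.Xc 0 j ω / Real.sqrt (M.lam j)| ^ k ∂M.P ≤ η

/-- `E|Y/σ_Y|ᵏ ≤ η` -/
def Model.momY (M : Model) (b : ℕ → ℝ) (k : ℕ) (η : ℝ) : Prop :=
  Integrable (fun ω => |M.Y b 0 ω / Real.sqrt (M.varY b)| ^ k) M.P ∧
    ∫ ω, |M.Y b 0 ω / Real.sqrt (M.varY b)| ^ k ∂M.P ≤ η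

/-- the series `⟨β, X_i⟩ = Σ_j [β]_j [X_i]_j` converges almost surely -/
def Model.innerSummable (M : Model) (b : ℕ → ℝ) : Prop :=
  ∀ i, ∀ᵐ ω ∂M.P, Summable (fun j : ℕ => b (j + 1) * M.Xc i (j + 1) ω)

/-- `[ĝ]_j = n⁻¹ Σ_i Y_i [X_i]_j` -/
def Model.ghat (M : Model) (b : ℕ → ℝ) (n j : ℕ) (ω : M.Ω) : ℝ :=
  (n : ℝ)⁻¹ * ∑ i ∈ Finset.range n, M.Y b i ω * M.Xc i j ω

/-- `λ̂_j = n⁻¹ Σ_i [X_i]_j²` -/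
def Model.lamhat (M : Model) (n j : ℕ) (ω : M.Ω) : ℝ :=
  (n : ℝ)⁻¹ * ∑ i ∈ Finset.range n, (M.Xc i j ω) ^ 2

/-- the `j`-th coefficient of `Φ̂_ĝ`, i.e. `([ĝ]_j/λ̂_j)·1{λ̂_j ≥ 1/n}` -/
def Model.phiGhat (M : Model) (b : ℕ → ℝ) (n j : ℕ) (ω : M.Ω) : ℝ :=
  if 1 / (n : ℝ) ≤ M.lamhat n j ω then M.ghat b n j ω / M.lamhat n j ω else 0

/-- the `j`-th coefficient of the orthogonal series estimator `β̂_m` -/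
def Model.bhat (M : Model) (b : ℕ → ℝ) (n m j : ℕ) (ω : M.Ω) : ℝ :=
  if 1 ≤ j ∧ j ≤ m then M.phiGhat b n j ω else 0

/-- the contrast `Υ(t) = ‖t‖²_ω − 2⟨t, Φ̂_ĝ⟩_ω` of a coefficient sequence `t` -/
def Model.contrast (M : Model) (w b : ℕ → ℝ) (n : ℕ) (t : ℕ → ℝ) (ω : M.Ω) : ℝ :=
  (∑' j : ℕ, w (j + 1) * t (j + 1) ^ 2)
    - 2 * ∑' j : ℕ, w (j + 1) * t (j + 1) * M.phiGhat b n (j + 1) ω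

/-- the penalty `pen(m) = 192 σ_Y² η δ_m / n` -/
def Model.pen (M : Model) (b : ℕ → ℝ) (η : ℝ) (δ : ℕ → ℝ) (n m : ℕ) : ℝ :=
  192 * M.varY b * η * δ m / n

/-- the `𝓕_ω`-risk `E‖β̂_{m̂} − β‖²_ω` of the estimator with (data-driven) dimension `mhat` -/
def Model.risk (M : Model) (w b : ℕ → ℝ) (n : ℕ) (mhat : M.Ω → ℕ) : ℝ :=
  ∫ ω, ∑' j : ℕ, w (j + 1) * (M.bhat b n (mhat ω) (j + 1) ω - b (j + 1)) ^ 2 ∂M.P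

/-- `β ∈ 𝓕ʳ_γ`, the ellipsoid `‖β‖²_γ ≤ r` -/
def inEllipsoid (γ : ℕ → ℝ) (r : ℝ) (b : ℕ → ℝ) : Prop :=
  Summable (fun j : ℕ => γ (j + 1) * b (j + 1) ^ 2) ∧
    ∑' j : ℕ, γ (j + 1) * b (j + 1) ^ 2 ≤ r

/-- Assumption 1 on the weight sequences `ω` (here `w`) and `γ` -/
def Assumption1 (w γ : ℕ → ℝ) : Prop :=
  (∀ j, 1 ≤ j → 0 < w j) ∧ (∀ j, 1 ≤ j → 0 < γ j) ∧ w 1 = 1 ∧ γ 1 = 1 ∧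
    (∀ j k, 1 ≤ j → j ≤ k → (γ k)⁻¹ ≤ (γ j)⁻¹) ∧
    Tendsto (fun j => (γ j)⁻¹) atTop (nhds (0 : ℝ)) ∧
    (∀ j k, 1 ≤ j → j ≤ k → w k / γ k ≤ w j / γ j) ∧
    Tendsto (fun j => w j / γ j) atTop (nhds (0 : ℝ))

/-- `M_n = argmax{1 ≤ M ≤ n : δ_M ≤ δ_1 n min(ω_M, 1)}` -/
def Mseq (w δ : ℕ → ℝ) (n : ℕ) : ℕ :=
  sSup {M : ℕ | 1 ≤ M ∧ M ≤ n ∧ δ M ≤ δ 1 * n * min (w M) 1}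

/-- `N_n = argmax{1 ≤ N ≤ n : max_{1≤j≤N} ω_j ≤ n}` -/
def Nseq (w : ℕ → ℝ) (n : ℕ) : ℕ :=
  sSup {N : ℕ | 1 ≤ N ∧ N ≤ n ∧ ∀ j, 1 ≤ j → j ≤ N → w j ≤ n}

/-- Assumption 2 on the sequences `δ`, `Δ` and `M = (M_n)` (relative to `λ` and `ω`) -/
def Assumption2 (lam w δ Δ : ℕ → ℝ) (Sig : ℝ) : Prop :=
  (∀ j k, 1 ≤ j → j ≤ k → δ j ≤ δ k) ∧ (∀ j k, 1 ≤ j → j ≤ k → Δ j ≤ Δ k) ∧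
    (∀ m, 1 ≤ m → ∑ j ∈ Finset.Icc 1 m, w j / lam j ≤ δ m) ∧
    (∀ m, 1 ≤ m → ∀ j, 1 ≤ j → j ≤ m → w j / lam j ≤ Δ m) ∧
    Summable (fun m : ℕ => Δ (m + 1) * Real.exp (-δ (m + 1) / (6 * Δ (m + 1)))) ∧
    (∑' m : ℕ, Δ (m + 1) * Real.exp (-δ (m + 1) / (6 * Δ (m + 1)))) ≤ Sig ∧
    (∀ n : ℕ, 1 ≤ n → ∀ j, 1 ≤ j → j ≤ Mseq w δ n → 2 / (n : ℝ) ≤ lam j)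

/-- `m̂` is a minimizer of the penalized contrast over `{1, …, Mn}` -/
def Model.IsSelection (M : Model) (w b δ : ℕ → ℝ) (η : ℝ) (n Mn : ℕ)
    (mhat : M.Ω → ℕ) : Prop :=
  Measurable mhat ∧ ∀ ω, (1 ≤ mhat ω ∧ mhat ω ≤ Mn) ∧
    ∀ m, 1 ≤ m → m ≤ Mn →
      M.contrast w b n (fun j => M.bhat b n (mhat ω) j ω) ω + M.pen b η δ n (mhat ω)
        ≤ M.contrast w b n (fun j => M.bhat b n m j ω) ω + M.pen b η δ n m

/-- `max_{1 ≤ j ≤ m} f j` -/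
def maxIcc (f : ℕ → ℝ) (m : ℕ) : ℝ := sSup (f '' Set.Icc 1 m)

/-- the intrinsic choice `Δ_m = max_{1≤j≤m} ω_j/λ_j` -/
def intrinsicDelta (lam w : ℕ → ℝ) (m : ℕ) : ℝ := maxIcc (fun j => w j / lam j) m

/-- the intrinsic `κ_m = max_{1≤j≤m} max(ω_j,1)/λ_j` -/
def intrinsicKappa (lam w : ℕ → ℝ) (m : ℕ) : ℝ := maxIcc (fun j => max (w j) 1 / lam j) m

/-- the intrinsic choice `δ_m = m Δ_m log(κ_m ∨ (m+2)) / log(m+2)` -/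
def intrinsicdelta (lam w : ℕ → ℝ) (m : ℕ) : ℝ :=
  (m : ℝ) * intrinsicDelta lam w m
    * (Real.log (max (intrinsicKappa lam w m) ((m : ℝ) + 2)) / Real.log ((m : ℝ) + 2))

/-- the estimated `Δ̂_m` -/
def Model.Deltahat (M : Model) (w : ℕ → ℝ) (n m : ℕ) (ω : M.Ω) : ℝ :=
  maxIcc (fun j => if 1 / (n : ℝ) ≤ M.lamhat n j ω then w j / M.lamhat n j ω else 0) m

/-- the estimated `κ̂_m` -/
def Model.kappahat (M : Model) (w : ℕ → ℝ) (n m : ℕ) (ω : M.Ω) : ℝ :=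
  maxIcc (fun j => if 1 / (n : ℝ) ≤ M.lamhat n j ω then max (w j) 1 / M.lamhat n j ω else 0) m

/-- the estimated `δ̂_m` -/
def Model.deltahat (M : Model) (w : ℕ → ℝ) (n m : ℕ) (ω : M.Ω) : ℝ :=
  (m : ℝ) * M.Deltahat w n m ω
    * (Real.log (max (M.kappahat w n m ω) ((m : ℝ) + 2)) / Real.log ((m : ℝ) + 2))

/-- the random penalty `p̂en(m) = 1920 σ_Y² η δ̂_m / n` -/
def Model.penhat (M : Model) (w b : ℕ → ℝ) (η : ℝ) (n m : ℕ) (ω : M.Ω) : ℝ :=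
  1920 * M.varY b * η * M.deltahat w n m ω / n

/-- the random upper bound `M̂_n = argmax{1 ≤ M ≤ N_n : λ̂_M/(M max(ω_M,1)) ≥ (log n)/n}` -/
def Model.MhatSeq (M : Model) (w : ℕ → ℝ) (n : ℕ) (ω : M.Ω) : ℕ :=
  sSup {Mm : ℕ | 1 ≤ Mm ∧ Mm ≤ Nseq w n ∧
    Real.log n / n ≤ M.lamhat n Mm ω / (Mm * max (w Mm) 1)}

/-- `m̂` is a minimizer of the fully data-driven penalized contrast over `{1, …, M̂_n}` -/
def Model.IsSelectionRand (M : Model) (w b : ℕ → ℝ) (η : ℝ) (n : ℕ)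
    (mhat : M.Ω → ℕ) : Prop :=
  Measurable mhat ∧ ∀ ω, (1 ≤ mhat ω ∧ mhat ω ≤ M.MhatSeq w n ω) ∧
    ∀ m, 1 ≤ m → m ≤ M.MhatSeq w n ω →
      M.contrast w b n (fun j => M.bhat b n (mhat ω) j ω) ω + M.penhat w b η n (mhat ω) ω
        ≤ M.contrast w b n (fun j => M.bhat b n m j ω) ω + M.penhat w b η n m ω

/-- Assumption 3 on `M = (M_n)`, `m† = (m†_n)` and `N = (N_n)` for the intrinsic sequences -/
def Assumption3 (lam w γ : ℕ → ℝ) (mdag : ℕ → ℕ) (ς : ℝ) : Prop :=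
  (∀ n : ℕ, 1 ≤ n → ∀ j, 1 ≤ j → j ≤ Mseq w (intrinsicdelta lam w) n → 2 / (n : ℝ) ≤ lam j) ∧
    (∀ n : ℕ, 1 ≤ n → ∀ m : ℕ, Mseq w (intrinsicdelta lam w) n < m →
      lam m / (m * max (w m) 1) ≤ Real.log n / (2 * n)) ∧
    1 ≤ ς ∧
    (∀ n : ℕ, 1 ≤ n → 1 ≤ mdag n ∧
      ς⁻¹ ≤ γ (mdag n) * intrinsicdelta lam w (mdag n) / (n * w (mdag n)) ∧
      γ (mdag n) * intrinsicdelta lam w (mdag n) / (n * w (mdag n)) ≤ ς) ∧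
    (∀ n : ℕ, 1 ≤ n → ∀ m, 1 ≤ m → m ≤ mdag n →
      2 * Real.log n / n ≤ lam m / (m * max (w m) 1)) ∧
    (∀ n : ℕ, 1 ≤ n → Mseq w (intrinsicdelta lam w) n ≤ Nseq w n ∧ Nseq w n ≤ n)

/-- `sup_{t ∈ B_m} |⟨t, v⟩_ω|²` where `v` is (the coefficient sequence of) a function and
`B_m` is the unit ball of `span(φ_1,…,φ_m)` w.r.t. `‖·‖_ω`  -/
def ballSup (w : ℕ → ℝ) (m : ℕ) (v : ℕ → ℝ) : ℝ :=
  sSup {x : ℝ | ∃ c : ℕ → ℝ, (∑ j ∈ Finset.Icc 1 m, w j * c j ^ 2) ≤ 1 ∧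
    x = |∑ j ∈ Finset.Icc 1 m, w j * c j * v j| ^ 2}

/-- the event `Ω_{Y_i, X_i}` -/
def Model.goodEvent (M : Model) (b w δ : ℕ → ℝ) (n i : ℕ) : Set M.Ω :=
  {ω | |M.Y b i ω / Real.sqrt (M.varY b)| ≤ (n : ℝ) ^ ((1 : ℝ) / 6) ∧
    ∀ j, 1 ≤ j → j ≤ Mseq w δ n → |M.Xc i j ω / Real.sqrt (M.lam j)| ≤ (n : ℝ) ^ ((1 : ℝ) / 6)}

/-- the Fourier coefficients `[ĥ]_j` -/
def Model.hhat (M : Model) (b w δ : ℕ → ℝ) (n j : ℕ) (ω : M.Ω) : ℝ :=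
  (n : ℝ)⁻¹ * ∑ i ∈ Finset.range n,
    ((M.goodEvent b w δ n i).indicator (fun ω' => M.Y b i ω' * M.Xc i j ω') ω
      - ∫ ω', (M.goodEvent b w δ n i).indicator (fun ω' => M.Y b i ω' * M.Xc i j ω') ω' ∂M.P)

/-- the Fourier coefficients `[f̂]_j` -/
def Model.fhat (M : Model) (b w δ : ℕ → ℝ) (n j : ℕ) (ω : M.Ω) : ℝ :=
  (n : ℝ)⁻¹ * ∑ i ∈ Finset.range n,
    ((M.goodEvent b w δ n i)ᶜ.indicator (fun ω' => M.Y b i ω' * M.Xc i j ω') ω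
      - ∫ ω', (M.goodEvent b w δ n i)ᶜ.indicator (fun ω' => M.Y b i ω' * M.Xc i j ω') ω' ∂M.P)


open Finset in
lemma prod_le_one_add_sum_pow {ι : Type*} (A : Finset ι) (x : ι → ℝ) (p : ℕ)
    (hA : A.card ≤ p) (hx : ∀ s ∈ A, 0 ≤ x s) :
    ∏ s ∈ A, x s ≤ 1 + ∑ s ∈ A, x s ^ p := by
  have hsum : 0 ≤ ∑ s ∈ A, x s ^ p :=
    Finset.sum_nonneg fun s hs => pow_nonneg (hx s hs) p
  rcases A.eq_empty_or_nonempty with h | h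
  · simp [h]
  set M : ℝ := (A.sup' h x) ⊔ 1 with hM
  have hM1 : (1 : ℝ) ≤ M := le_max_right _ _
  have h1 : ∏ s ∈ A, x s ≤ M ^ A.card := by
    calc ∏ s ∈ A, x s ≤ ∏ _s ∈ A, M :=
          Finset.prod_le_prod hx fun s hs =>
            le_trans (Finset.le_sup' x hs) (le_max_left _ _)
      _ = M ^ A.card := Finset.prod_const M
  have h2 : M ^ A.card ≤ M ^ p := pow_le_pow_right₀ hM1 hA
  obtain ⟨t, ht, hts⟩ := A.exists_mem_eq_sup' h x
  have h3 : M ^ p ≤ 1 + ∑ s ∈ A, x s ^ p := by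
    rcases le_total (x t) 1 with h4 | h4
    · have : M = 1 := by rw [hM, hts]; exact sup_eq_right.mpr h4
      rw [this]; simpa using hsum
    · have : M = x t := by rw [hM, hts]; exact sup_eq_left.mpr h4
      rw [this]
      have : x t ^ p ≤ ∑ s ∈ A, x s ^ p :=
        Finset.single_le_sum (fun s hs => pow_nonneg (hx s hs) p) ht
      linarith
  linarith

/-- minimal representative of the fiber of `g` containing `s` -/
def minRep {p : ℕ} (g : Fin p → ℕ) (s : Fin p) : Fin p :=
  (Finset.univ.filter fun t => g t = g s).min' ⟨s, by simp⟩

lemma minRep_mem {p : ℕ} (g : Fin p → ℕ) (s : Fin p) :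
    minRep g s ∈ Finset.univ.filter fun t => g t = g s :=
  Finset.min'_mem _ _

lemma minRep_spec {p : ℕ} (g : Fin p → ℕ) (s : Fin p) : g (minRep g s) = g s :=
  (Finset.mem_filter.mp (minRep_mem g s)).2

lemma minRep_congr {p : ℕ} (g : Fin p → ℕ) {s t : Fin p} (h : g s = g t) :
    minRep g s = minRep g t := by
  apply le_antisymm
  · exact Finset.min'_le _ _ (by simp [Finset.mem_filter, minRep_spec g t, h])
  · exact Finset.min'_le _ _ (by simp [Finset.mem_filter, minRep_spec g s, h])

lemma minRep_le {p : ℕ} (g : Fin p → ℕ) (s : Fin p) : minRep g s ≤ s :=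
  Finset.min'_le _ _ (by simp)

lemma minRep_idem {p : ℕ} (g : Fin p → ℕ) (s : Fin p) :
    minRep g (minRep g s) = minRep g s := by
  apply le_antisymm
  · exact minRep_le g _
  · exact le_of_eq (minRep_congr g (minRep_spec g s)).symm

lemma count_good (k n : ℕ) (hk : 1 ≤ k) (hn : 1 ≤ n) :
    ((Fintype.piFinset fun _ : Fin (2 * k) => Finset.range n).filter
      (fun g => ∀ v ∈ Finset.range n,
        (Finset.univ.filter fun s => g s = v).card ≠ 1)).card
      ≤ (2 * k) ^ (2 * k) * n ^ k := by
  set p := 2 * k with hp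
  set E := ((Fintype.piFinset fun _ : Fin p => Finset.range n).filter
      (fun g => ∀ v ∈ Finset.range n,
        (Finset.univ.filter fun s => g s = v).card ≠ 1)) with hE
  have hmaps : ∀ g ∈ E, (minRep g : Fin p → Fin p) ∈ (Finset.univ : Finset (Fin p → Fin p)) :=
    fun _ _ => Finset.mem_univ _
  rw [Finset.card_eq_sum_card_fiberwise hmaps]
  have hfiber : ∀ m : Fin p → Fin p,
      (E.filter fun g => minRep g = m).card ≤ n ^ k := by
    intro m
    rcases (E.filter fun g => minRep g = m).eq_empty_or_nonempty with h | ⟨g₀, hg₀⟩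
    · simp [h]
    obtain ⟨hg₀E, hg₀m⟩ := Finset.mem_filter.mp hg₀
    obtain ⟨hg₀pi, hg₀good⟩ := Finset.mem_filter.mp hg₀E
    set Fix := Finset.univ.filter fun s : Fin p => m s = s with hFix
    have hms : ∀ s, m s ∈ Fix := by
      intro s
      rw [Finset.mem_filter]
      refine ⟨Finset.mem_univ _, ?_⟩
      rw [← hg₀m]
      exact minRep_idem g₀ s
    -- Claim A : Fix.card ≤ k
    have hFixk : Fix.card ≤ k := by
      have hsum : (Finset.univ : Finset (Fin p)).card
          = ∑ t ∈ Fix, (Finset.univ.filter fun s => m s = t).card :=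
        Finset.card_eq_sum_card_fiberwise fun s _ => hms s
      have htwo : ∀ t ∈ Fix, 2 ≤ (Finset.univ.filter fun s => m s = t).card := by
        intro t htf
        have hmt : m t = t := (Finset.mem_filter.mp htf).2
        have hvin : g₀ t ∈ Finset.range n := Fintype.mem_piFinset.mp hg₀pi t
        have hone : (Finset.univ.filter fun s => g₀ s = g₀ t).card ≠ 1 :=
          hg₀good (g₀ t) hvin
        have htin : t ∈ Finset.univ.filter fun s => g₀ s = g₀ t := by simp
        have hpos : 0 < (Finset.univ.filter fun s => g₀ s = g₀ t).card :=
          Finset.card_pos.mpr ⟨t, htin⟩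
        have hlt : 1 < (Finset.univ.filter fun s => g₀ s = g₀ t).card := by omega
        obtain ⟨s, hs, hst⟩ := Finset.exists_mem_ne hlt t
        have hgs : g₀ s = g₀ t := (Finset.mem_filter.mp hs).2
        have : m s = t := by
          rw [← hg₀m]
          rw [minRep_congr g₀ hgs, hg₀m, hmt]
        exact Finset.one_lt_card.mpr ⟨t, by simp [hmt], s, by simp [this], hst.symm⟩
      have : 2 * Fix.card ≤ p := by
        calc 2 * Fix.card = ∑ _t ∈ Fix, 2 := by
              rw [Finset.sum_const, smul_eq_mul, mul_comm]
          _ ≤ ∑ t ∈ Fix, (Finset.univ.filter fun s => m s = t).card :=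
              Finset.sum_le_sum htwo
          _ = (Finset.univ : Finset (Fin p)).card := hsum.symm
          _ = p := by simp
      omega
    -- Claim B : fiber injects into functions Fix → range n
    have hinj : (E.filter fun g => minRep g = m).card
        ≤ (Fintype.piFinset fun _ : {t // t ∈ Fix} => Finset.range n).card := by
      apply Finset.card_le_card_of_injOn (fun g => fun s : {t // t ∈ Fix} => g s.1)
      · intro g hg
        obtain ⟨hgE, _⟩ := Finset.mem_filter.mp hg
        obtain ⟨hgpi, _⟩ := Finset.mem_filter.mp hgE
        exact Fintype.mem_piFinset.mpr fun s => Fintype.mem_piFinset.mp hgpi s.1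
      · intro g hg g' hg' heq
        have hgm : minRep g = m := (Finset.mem_filter.mp hg).2
        have hg'm : minRep g' = m := (Finset.mem_filter.mp hg').2
        funext s
        have h1 : g (m s) = g s := by rw [← hgm]; exact minRep_spec g s
        have h2 : g' (m s) = g' s := by rw [← hg'm]; exact minRep_spec g' s
        have h3 : g (m s) = g' (m s) := congrFun heq ⟨m s, hms s⟩
        rw [← h1, ← h2, h3]
    have hcard : (Fintype.piFinset fun _ : {t // t ∈ Fix} => Finset.range n).card
        = n ^ Fix.card := by
      rw [Fintype.card_piFinset]
      simp [Fintype.card_coe]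
    calc (E.filter fun g => minRep g = m).card
        ≤ n ^ Fix.card := by rw [← hcard]; exact hinj
      _ ≤ n ^ k := Nat.pow_le_pow_right hn hFixk
  calc ∑ m ∈ (Finset.univ : Finset (Fin p → Fin p)),
        (E.filter fun g => minRep g = m).card
      ≤ ∑ _m ∈ (Finset.univ : Finset (Fin p → Fin p)), n ^ k :=
        Finset.sum_le_sum fun m _ => hfiber m
    _ = (Finset.univ : Finset (Fin p → Fin p)).card * n ^ k := by
        rw [Finset.sum_const, smul_eq_mul]
    _ = p ^ p * n ^ k := by
        rw [Finset.card_univ, Fintype.card_fun]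
        simp


lemma abs_sq_sub_one_pow_le (a : ℝ) (m : ℕ) : |a ^ 2 - 1| ^ m ≤ 2 ^ m * (|a| ^ (2 * m) + 1) := by
  have h0 : |a ^ 2 - 1| ≤ a ^ 2 + 1 := by
    rw [abs_le]; constructor <;> nlinarith [sq_nonneg a]
  have h1 : |a ^ 2 - 1| ^ m ≤ (a ^ 2 + 1) ^ m := pow_le_pow_left₀ (abs_nonneg _) h0 m
  have hx : (0:ℝ) ≤ |a| ^ (2 * m) := pow_nonneg (abs_nonneg a) (2 * m)
  have h2p : (0:ℝ) < 2 ^ m := by positivity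
  have h2 : (a ^ 2 + 1) ^ m ≤ 2 ^ m * (|a| ^ (2 * m) + 1) := by
    rcases le_total (a ^ 2) 1 with h | h
    · calc (a ^ 2 + 1) ^ m ≤ 2 ^ m := pow_le_pow_left₀ (by positivity) (by linarith) m
        _ ≤ 2 ^ m * (|a| ^ (2 * m) + 1) := le_mul_of_one_le_right h2p.le (by linarith)
    · calc (a ^ 2 + 1) ^ m ≤ (2 * a ^ 2) ^ m := pow_le_pow_left₀ (by positivity) (by linarith) m
        _ = 2 ^ m * (a ^ 2) ^ m := mul_pow 2 (a ^ 2) m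
        _ = 2 ^ m * |a| ^ (2 * m) := by rw [← sq_abs, ← pow_mul]
        _ ≤ 2 ^ m * (|a| ^ (2 * m) + 1) := by nlinarith
  exact le_trans h1 h2

open Finset in
lemma moment_bound {Ω : Type*} [MeasurableSpace Ω] (P : Measure Ω) [IsProbabilityMeasure P]
    (k : ℕ) (hk : 1 ≤ k) (ξ : ℕ → Ω → ℝ) (hmeas : ∀ i, Measurable (ξ i))
    (hindep : iIndepFun ξ P)
    (B : ℝ) (hB : 1 ≤ B)
    (hint : ∀ i, Integrable (fun ω => |ξ i ω| ^ (2 * k)) P)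
    (hmom : ∀ i, ∫ ω, |ξ i ω| ^ (2 * k) ∂P ≤ B)
    (hmean : ∀ i, ∫ ω, ξ i ω ∂P = 0)
    (n : ℕ) (hn : 1 ≤ n) :
    Integrable (fun ω => (∑ i ∈ Finset.range n, ξ i ω) ^ (2 * k)) P ∧
    ∫ ω, (∑ i ∈ Finset.range n, ξ i ω) ^ (2 * k) ∂P
      ≤ ((2 * k) ^ (2 * k) * n ^ k : ℕ) * ((1 + 2 * (k : ℝ)) * B) := by
  have hB0 : 0 ≤ B := le_trans zero_le_one hB
  set p := 2 * k with hp
  have hp1 : 1 ≤ p := by omega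
  -- measurability of products
  have hprod_meas : ∀ (A : Finset (Fin p)) (g : Fin p → ℕ),
      Measurable (fun ω => ∏ s ∈ A, ξ (g s) ω) :=
    fun A g => A.measurable_prod fun s _ => hmeas (g s)
  -- pointwise domination
  have hdom : ∀ (A : Finset (Fin p)) (g : Fin p → ℕ) (ω : Ω),
      |∏ s ∈ A, ξ (g s) ω| ≤ 1 + ∑ s ∈ A, |ξ (g s) ω| ^ p := by
    intro A g ω
    rw [Finset.abs_prod]
    exact prod_le_one_add_sum_pow A _ p
      (le_trans (Finset.card_le_univ A) (by simp)) (fun s _ => abs_nonneg _)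
  have hdom_int : ∀ (A : Finset (Fin p)) (g : Fin p → ℕ),
      Integrable (fun ω => 1 + ∑ s ∈ A, |ξ (g s) ω| ^ p) P :=
    fun A g => (integrable_const 1).add (integrable_finset_sum A fun s _ => hint (g s))
  have hint_prod : ∀ (A : Finset (Fin p)) (g : Fin p → ℕ),
      Integrable (fun ω => ∏ s ∈ A, ξ (g s) ω) P := by
    intro A g
    exact (hdom_int A g).mono' (hprod_meas A g).aestronglyMeasurable
      (ae_of_all _ fun ω => by simpa [Real.norm_eq_abs, Finset.abs_prod] using hdom A g ω)
  -- uniform bound on each term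
  have hbound : ∀ (g : Fin p → ℕ),
      ∫ ω, ∏ s, ξ (g s) ω ∂P ≤ (1 + (p : ℝ)) * B := by
    intro g
    have h1 : ∫ ω, ∏ s, ξ (g s) ω ∂P ≤ ∫ ω, |∏ s, ξ (g s) ω| ∂P := by
      calc ∫ ω, ∏ s, ξ (g s) ω ∂P ≤ |∫ ω, ∏ s, ξ (g s) ω ∂P| := le_abs_self _
        _ ≤ ∫ ω, |∏ s, ξ (g s) ω| ∂P := by
            have := norm_integral_le_integral_norm (μ := P) (fun ω => ∏ s, ξ (g s) ω)
            simpa only [Real.norm_eq_abs] using this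
    have h2 : ∫ ω, |∏ s, ξ (g s) ω| ∂P ≤ ∫ ω, (1 + ∑ s, |ξ (g s) ω| ^ p) ∂P :=
      integral_mono (hint_prod univ g).abs (hdom_int univ g) (fun ω => hdom univ g ω)
    have h3 : ∫ ω, (1 + ∑ s, |ξ (g s) ω| ^ p) ∂P = 1 + ∑ s, ∫ ω, |ξ (g s) ω| ^ p ∂P := by
      rw [integral_add (integrable_const 1) (integrable_finset_sum _ fun s _ => hint (g s))]
      rw [integral_const, integral_finset_sum _ fun s _ => hint (g s)]
      simp
    have h4 : ∑ s : Fin p, ∫ ω, |ξ (g s) ω| ^ p ∂P ≤ (p : ℝ) * B := by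
      calc ∑ s : Fin p, ∫ ω, |ξ (g s) ω| ^ p ∂P ≤ ∑ _s : Fin p, B :=
            Finset.sum_le_sum fun s _ => hmom (g s)
        _ = (p : ℝ) * B := by simp [mul_comm]
    calc ∫ ω, ∏ s, ξ (g s) ω ∂P ≤ 1 + ∑ s : Fin p, ∫ ω, |ξ (g s) ω| ^ p ∂P := by
          rw [← h3]; exact le_trans h1 h2
      _ ≤ 1 + (p : ℝ) * B := by linarith
      _ ≤ (1 + (p : ℝ)) * B := by nlinarith [Nat.cast_nonneg (α := ℝ) p]
  -- expansion
  have expand : ∀ ω : Ω, (∑ i ∈ Finset.range n, ξ i ω) ^ p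
      = ∑ g ∈ Fintype.piFinset (fun _ : Fin p => Finset.range n), ∏ s, ξ (g s) ω := by
    intro ω
    calc (∑ i ∈ Finset.range n, ξ i ω) ^ p
        = ∏ _s : Fin p, (∑ i ∈ Finset.range n, ξ i ω) := by
          rw [Finset.prod_const, Finset.card_univ, Fintype.card_fin]
      _ = ∑ g ∈ Fintype.piFinset (fun _ : Fin p => Finset.range n), ∏ s, ξ (g s) ω :=
          Finset.prod_univ_sum _ _
  have hswap : ∫ ω, (∑ i ∈ Finset.range n, ξ i ω) ^ p ∂P
      = ∑ g ∈ Fintype.piFinset (fun _ : Fin p => Finset.range n), ∫ ω, ∏ s, ξ (g s) ω ∂P := by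
    simp_rw [expand]
    exact integral_finset_sum _ fun g _ => hint_prod univ g
  -- vanishing of the bad terms
  have hzero : ∀ g ∈ Fintype.piFinset (fun _ : Fin p => Finset.range n),
      ¬ (∀ v ∈ Finset.range n, (Finset.univ.filter fun s => g s = v).card ≠ 1) →
      ∫ ω, ∏ s, ξ (g s) ω ∂P = 0 := by
    intro g _hg hbad
    push_neg at hbad
    obtain ⟨v, _hvn, hv1⟩ := hbad
    obtain ⟨s0, hs0⟩ := Finset.card_eq_one.mp hv1
    have hgs0 : g s0 = v := by
      have : s0 ∈ Finset.univ.filter fun s => g s = v := hs0 ▸ Finset.mem_singleton_self s0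
      exact (Finset.mem_filter.mp this).2
    set c : ℕ → ℕ := fun i => if i = v then 1
      else (((Finset.univ.filter fun s => ¬ g s = v)).filter fun s => g s = i).card with hc
    set ζ : ℕ → Ω → ℝ := fun i ω => ξ i ω ^ c i with hζ
    have hζmeas : ∀ i, Measurable (ζ i) := fun i => (hmeas i).pow_const (c i)
    have hζindep : iIndepFun ζ P :=
      hindep.comp (fun i (x : ℝ) => x ^ c i) (fun i => measurable_id.pow_const (c i))
    set t : Finset ℕ := (Finset.image g Finset.univ).erase v with ht
    have hvt : v ∉ t := Finset.notMem_erase _ _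
    have hζv : ζ v = ξ v := by funext ω; simp [hζ, hc]
    have hfact : ∀ ω, ∏ s ∈ Finset.univ.filter (fun s => ¬ g s = v), ξ (g s) ω
        = ∏ i ∈ t, ζ i ω := by
      intro ω
      have hmapsto : ∀ x ∈ Finset.univ.filter (fun s => ¬ g s = v), g x ∈ t := fun x hx =>
        Finset.mem_erase.mpr ⟨(Finset.mem_filter.mp hx).2,
          Finset.mem_image_of_mem g (Finset.mem_univ x)⟩
      rw [← Finset.prod_fiberwise_of_maps_to hmapsto (fun s => ξ (g s) ω)]
      apply Finset.prod_congr rfl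
      intro i hi
      have hiv : i ≠ v := (Finset.mem_erase.mp hi).1
      have heach : ∀ x ∈ (Finset.univ.filter fun s => ¬ g s = v).filter (fun s => g s = i),
          ξ (g x) ω = ξ i ω := fun x hx => by rw [(Finset.mem_filter.mp hx).2]
      rw [Finset.prod_congr rfl heach, Finset.prod_const]
      simp [hζ, hc, if_neg hiv]
    have hsplit : (fun ω => ∏ s, ξ (g s) ω)
        = fun ω => ξ v ω * (∏ j ∈ t, ζ j) ω := by
      funext ω
      rw [← Finset.prod_filter_mul_prod_filter_not Finset.univ (fun s => g s = v)
        (fun s => ξ (g s) ω)]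
      rw [Finset.prod_apply, ← hfact ω]
      congr 1
      rw [hs0, Finset.prod_singleton, hgs0]
    have hindepfun : IndepFun (ζ v) (∏ j ∈ t, ζ j) P :=
      (hζindep.indepFun_finsetProd_of_notMem hζmeas hvt).symm
    have hint2 : Integrable (∏ j ∈ t, ζ j) P := by
      have : (∏ j ∈ t, ζ j)
          = fun ω => ∏ s ∈ Finset.univ.filter (fun s => ¬ g s = v), ξ (g s) ω := by
        funext ω; rw [Finset.prod_apply]; exact (hfact ω).symm
      rw [this]; exact hint_prod _ g
    have hintv : Integrable (ξ v) P := by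
      apply ((integrable_const 1).add (hint v)).mono' (hmeas v).aestronglyMeasurable
      refine ae_of_all _ fun ω => ?_
      have h1 : |ξ v ω| ≤ 1 + |ξ v ω| ^ p := by
        rcases le_total (|ξ v ω|) 1 with h | h
        · nlinarith [pow_nonneg (abs_nonneg (ξ v ω)) p]
        · calc |ξ v ω| = |ξ v ω| ^ 1 := (pow_one _).symm
            _ ≤ |ξ v ω| ^ p := pow_le_pow_right₀ h hp1
            _ ≤ 1 + |ξ v ω| ^ p := by linarith
      simpa [Real.norm_eq_abs] using h1
    have hmul := IndepFun.integral_mul_eq_mul_integral hindepfun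
      (hζv ▸ hintv).aestronglyMeasurable hint2.aestronglyMeasurable
    calc ∫ ω, ∏ s, ξ (g s) ω ∂P = ∫ ω, (ζ v * ∏ j ∈ t, ζ j) ω ∂P := by
          rw [hsplit]
          apply integral_congr_ae
          exact ae_of_all _ fun ω => by simp [hζv]
      _ = (∫ ω, ζ v ω ∂P) * ∫ ω, (∏ j ∈ t, ζ j) ω ∂P := hmul
      _ = 0 := by rw [hζv, hmean v]; ring
  refine ⟨?_, ?_⟩
  · have heq : (fun ω => (∑ i ∈ Finset.range n, ξ i ω) ^ p)
        = fun ω => ∑ g ∈ Fintype.piFinset (fun _ : Fin p => Finset.range n), ∏ s, ξ (g s) ω :=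
      funext expand
    rw [heq]
    exact integrable_finset_sum _ fun g _ => hint_prod univ g
  -- put everything together
  rw [hswap,
    ← Finset.sum_filter_add_sum_filter_not (Fintype.piFinset fun _ : Fin p => Finset.range n)
      (fun g => ∀ v ∈ Finset.range n, (Finset.univ.filter fun s => g s = v).card ≠ 1)]
  have hz : ∑ g ∈ (Fintype.piFinset fun _ : Fin p => Finset.range n).filter
      (fun g => ¬ ∀ v ∈ Finset.range n, (Finset.univ.filter fun s => g s = v).card ≠ 1),
      ∫ ω, ∏ s, ξ (g s) ω ∂P = 0 :=
    Finset.sum_eq_zero fun g hg =>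
      hzero g (Finset.mem_filter.mp hg).1 (Finset.mem_filter.mp hg).2
  rw [hz, add_zero]
  set G := (Fintype.piFinset fun _ : Fin p => Finset.range n).filter
      (fun g => ∀ v ∈ Finset.range n, (Finset.univ.filter fun s => g s = v).card ≠ 1) with hG
  have h5 : ∑ g ∈ G, ∫ ω, ∏ s, ξ (g s) ω ∂P ≤ (G.card : ℝ) * ((1 + (p : ℝ)) * B) := by
    refine le_trans (Finset.sum_le_sum fun g _ => hbound g) ?_
    rw [Finset.sum_const, nsmul_eq_mul]
  refine le_trans h5 ?_
  have hcount := count_good k n hk hn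
  have hcast : (G.card : ℝ) ≤ (((2 * k) ^ (2 * k) * n ^ k : ℕ) : ℝ) := by
    exact_mod_cast hcount
  have hpos : (0 : ℝ) ≤ (1 + (p : ℝ)) * B := by positivity
  calc (G.card : ℝ) * ((1 + (p : ℝ)) * B)
      ≤ (((2 * k) ^ (2 * k) * n ^ k : ℕ) : ℝ) * ((1 + (p : ℝ)) * B) :=
        mul_le_mul_of_nonneg_right hcast hpos
    _ = ((2 * k) ^ (2 * k) * n ^ k : ℕ) * ((1 + 2 * (k : ℝ)) * B) := by rw [hp]; push_cast; ring


/-- Lemma A.4, bound (A.10): deviation probabilities for `λ̂_j/λ_j`. -/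
theorem statement14 :
    ∀ k : ℕ, 1 ≤ k → ∃ C : ℝ, 0 < C ∧
      ∀ (M : Model) (η w₁ w₂ : ℝ), 1 ≤ η → M.momX (4 * k) η → 2 ≤ w₁ → w₂ ≤ 1 / 2 →
        ∀ n : ℕ, 1 ≤ n →
          (∀ j : ℕ, 1 ≤ j →
            (M.P {ω | w₁ ≤ M.lamhat n j ω / M.lam j}).toReal ≤ C * η / (n : ℝ) ^ k) ∧
          (∀ j : ℕ, 1 ≤ j →
            (M.P {ω | M.lamhat n j ω / M.lam j < w₂}).toReal ≤ C * η / (n : ℝ) ^ k) := by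
  intro k hk
  set D : ℝ := ((2 * k : ℕ) : ℝ) ^ (2 * k) * (1 + 2 * (k : ℝ)) * 2 ^ (2 * k + 1) with hD
  have hDpos : 0 < D := by rw [hD]; positivity
  refine ⟨D * 2 ^ (2 * k), by positivity, ?_⟩
  intro M η w₁ w₂ hη hmomX hw1 hw2 n hn
  have npos : (0 : ℝ) < n := by exact_mod_cast hn
  have hev : Even (2 * k) := even_two_mul k
  -- the main moment estimate, for each fixed j
  have main : ∀ j : ℕ, 1 ≤ j →
      Integrable (fun ω => (∑ i ∈ Finset.range n,
        ((M.Xc i j ω) ^ 2 / M.lam j - 1)) ^ (2 * k)) M.P ∧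
      (∫ ω, (∑ i ∈ Finset.range n, ((M.Xc i j ω) ^ 2 / M.lam j - 1)) ^ (2 * k) ∂M.P
        ≤ D * η * (n : ℝ) ^ k) ∧
      ∀ ω, (∑ i ∈ Finset.range n, ((M.Xc i j ω) ^ 2 / M.lam j - 1))
        = (n : ℝ) * (M.lamhat n j ω / M.lam j) - n := by
    intro j hj
    have hlam : 0 < M.lam j := M.lam_pos j hj
    obtain ⟨hZint, hZmom⟩ := hmomX j hj
    set B : ℝ := 2 ^ (2 * k + 1) * η with hB'
    have h2p : (0:ℝ) < 2 ^ (2 * k) := by positivity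
    have hB : (1 : ℝ) ≤ B := by
      have h1 : (1 : ℝ) ≤ 2 ^ (2 * k + 1) := one_le_pow₀ one_le_two
      calc (1 : ℝ) ≤ 2 ^ (2 * k + 1) := h1
        _ ≤ 2 ^ (2 * k + 1) * η := le_mul_of_one_le_right (by positivity) hη
    have hmeas : ∀ i, Measurable (fun ω => (M.Xc i j ω) ^ 2 / M.lam j - 1) :=
      fun i => (((M.meas_Xc i j).pow_const 2).div_const _).sub_const 1
    have hindep : iIndepFun
        (fun i ω => (M.Xc i j ω) ^ 2 / M.lam j - 1) M.P := by
      have hg : Measurable (fun q : ℝ × (ℕ → ℝ) => (q.2 j) ^ 2 / M.lam j - 1) :=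
        ((((measurable_pi_apply j).comp measurable_snd).pow_const 2).div_const _).sub_const 1
      exact M.iid_indep.comp
        (fun _ => fun q : ℝ × (ℕ → ℝ) => (q.2 j) ^ 2 / M.lam j - 1) (fun _ => hg)
    have hFmeas : ∀ i, Measurable (fun ω => ((M.eps i ω : ℝ), fun j' => M.Xc i j' ω)) :=
      fun i => (M.meas_eps i).prodMk (measurable_pi_lambda _ fun j' => M.meas_Xc i j')
    have transfer : ∀ φ : ℝ → ℝ, Measurable φ → ∀ i : ℕ,
        (∫ ω, φ (M.Xc i j ω) ∂M.P = ∫ ω, φ (M.Xc 0 j ω) ∂M.P) ∧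
        (Integrable (fun ω => φ (M.Xc 0 j ω)) M.P →
          Integrable (fun ω => φ (M.Xc i j ω)) M.P) := by
      intro φ hφ i
      have hψ : Measurable (fun q : ℝ × (ℕ → ℝ) => φ (q.2 j)) :=
        hφ.comp ((measurable_pi_apply j).comp measurable_snd)
      have h1 : ∀ l : ℕ, ∫ ω, φ (M.Xc l j ω) ∂M.P
          = ∫ q, φ (q.2 j) ∂(MeasureTheory.Measure.map
              (fun ω => ((M.eps l ω : ℝ), fun j' => M.Xc l j' ω)) M.P) :=
        fun l => (integral_map (hFmeas l).aemeasurable hψ.aestronglyMeasurable).symm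
      have h2 : ∀ l : ℕ, Integrable (fun q : ℝ × (ℕ → ℝ) => φ (q.2 j))
          (MeasureTheory.Measure.map
            (fun ω => ((M.eps l ω : ℝ), fun j' => M.Xc l j' ω)) M.P)
          ↔ Integrable (fun ω => φ (M.Xc l j ω)) M.P :=
        fun l => (integrable_map_measure hψ.aestronglyMeasurable
          (hFmeas l).aemeasurable).trans Iff.rfl
      refine ⟨?_, ?_⟩
      · rw [h1 i, h1 0, M.iid_ident i]
      · intro h0
        refine (h2 i).mp ?_
        rw [M.iid_ident i]
        exact (h2 0).mpr h0
    have hZsq : ∀ ω, (M.Xc 0 j ω) ^ 2 / M.lam j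
        = (M.Xc 0 j ω / Real.sqrt (M.lam j)) ^ 2 := by
      intro ω; rw [div_pow, Real.sq_sqrt hlam.le]
    have hdom0 : ∀ ω, |(M.Xc 0 j ω) ^ 2 / M.lam j - 1| ^ (2 * k)
        ≤ 2 ^ (2 * k) * (|M.Xc 0 j ω / Real.sqrt (M.lam j)| ^ (4 * k) + 1) := by
      intro ω
      rw [hZsq ω]
      have := abs_sq_sub_one_pow_le (M.Xc 0 j ω / Real.sqrt (M.lam j)) (2 * k)
      rwa [show 2 * (2 * k) = 4 * k by ring] at this
    have hdomint : Integrable (fun ω => 2 ^ (2 * k)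
        * (|M.Xc 0 j ω / Real.sqrt (M.lam j)| ^ (4 * k) + 1)) M.P :=
      (hZint.add (integrable_const 1)).const_mul _
    have hint0 : Integrable
        (fun ω => |(M.Xc 0 j ω) ^ 2 / M.lam j - 1| ^ (2 * k)) M.P := by
      refine hdomint.mono' (((hmeas 0).abs.pow_const _).aestronglyMeasurable)
        (ae_of_all _ fun ω => ?_)
      rw [Real.norm_eq_abs, abs_of_nonneg (by positivity)]
      exact hdom0 ω
    have hmom0 : ∫ ω, |(M.Xc 0 j ω) ^ 2 / M.lam j - 1| ^ (2 * k) ∂M.P ≤ B := by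
      calc ∫ ω, |(M.Xc 0 j ω) ^ 2 / M.lam j - 1| ^ (2 * k) ∂M.P
          ≤ ∫ ω, 2 ^ (2 * k)
              * (|M.Xc 0 j ω / Real.sqrt (M.lam j)| ^ (4 * k) + 1) ∂M.P :=
            integral_mono hint0 hdomint hdom0
        _ = 2 ^ (2 * k)
            * ((∫ ω, |M.Xc 0 j ω / Real.sqrt (M.lam j)| ^ (4 * k) ∂M.P) + 1) := by
            rw [integral_const_mul, integral_add hZint (integrable_const 1), integral_const]
            simp
        _ ≤ 2 ^ (2 * k) * (η + 1) := by
            apply mul_le_mul_of_nonneg_left _ h2p.le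
            linarith
        _ ≤ B := by
            rw [hB', pow_succ]
            nlinarith
    have hsqint : Integrable (fun ω => (M.Xc 0 j ω) ^ 2 / M.lam j) M.P := by
      refine (hZint.add (integrable_const 1)).mono'
        ((((M.meas_Xc 0 j).pow_const 2).div_const _).aestronglyMeasurable)
        (ae_of_all _ fun ω => ?_)
      rw [Real.norm_eq_abs, hZsq ω, abs_of_nonneg (sq_nonneg _), ← sq_abs]
      simp only [Pi.add_apply]
      set z := |M.Xc 0 j ω / Real.sqrt (M.lam j)| with hz
      have hz0 : 0 ≤ z := abs_nonneg _
      rcases le_total z 1 with h | h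
      · nlinarith [pow_nonneg hz0 (4 * k)]
      · have h2 : z ^ 2 ≤ z ^ (4 * k) := pow_le_pow_right₀ h (by omega)
        linarith
    have hmean0 : ∫ ω, ((M.Xc 0 j ω) ^ 2 / M.lam j - 1) ∂M.P = 0 := by
      rw [integral_sub hsqint (integrable_const 1), integral_const]
      simp only [smul_eq_mul, measure_univ, ENNReal.toReal_one, one_mul, probReal_univ]
      rw [integral_div, M.Xc_var j hj, div_self hlam.ne']
      ring
    have hφ1meas : Measurable (fun x : ℝ => |x ^ 2 / M.lam j - 1| ^ (2 * k)) :=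
      (((measurable_id.pow_const 2).div_const _).sub_const 1).abs.pow_const _
    have hφ2meas : Measurable (fun x : ℝ => x ^ 2 / M.lam j - 1) :=
      ((measurable_id.pow_const 2).div_const _).sub_const 1
    have hint : ∀ i, Integrable
        (fun ω => |(M.Xc i j ω) ^ 2 / M.lam j - 1| ^ (2 * k)) M.P :=
      fun i => (transfer _ hφ1meas i).2 hint0
    have hmom : ∀ i, ∫ ω, |(M.Xc i j ω) ^ 2 / M.lam j - 1| ^ (2 * k) ∂M.P ≤ B :=
      fun i => le_trans (le_of_eq ((transfer _ hφ1meas i).1)) hmom0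
    have hmean : ∀ i, ∫ ω, ((M.Xc i j ω) ^ 2 / M.lam j - 1) ∂M.P = 0 :=
      fun i => ((transfer _ hφ2meas i).1).trans hmean0
    obtain ⟨hfint, hfb⟩ :=
      moment_bound M.P k hk _ hmeas hindep B hB hint hmom hmean n hn
    refine ⟨hfint, ?_, ?_⟩
    · refine le_trans hfb (le_of_eq ?_)
      rw [hD, hB']
      push_cast
      ring
    · intro ω
      have hn0 : (n : ℝ) ≠ 0 := ne_of_gt npos
      simp only [Model.lamhat]
      rw [Finset.sum_sub_distrib, Finset.sum_const, Finset.card_range, ← Finset.sum_div]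
      field_simp
      ring
  constructor
  · -- upper deviation
    intro j hj
    obtain ⟨hfint, hfb, hSeq⟩ := main j hj
    have hf0 : 0 ≤ᵐ[M.P] fun ω => (∑ i ∈ Finset.range n,
        ((M.Xc i j ω) ^ 2 / M.lam j - 1)) ^ (2 * k) :=
      ae_of_all _ fun ω => hev.pow_nonneg _
    have hmarkov := mul_meas_ge_le_integral_of_nonneg hf0 hfint ((n : ℝ) ^ (2 * k))
    have hsub : {ω | w₁ ≤ M.lamhat n j ω / M.lam j}
        ⊆ {ω | (n : ℝ) ^ (2 * k) ≤ (∑ i ∈ Finset.range n,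
            ((M.Xc i j ω) ^ 2 / M.lam j - 1)) ^ (2 * k)} := by
      intro ω hω
      simp only [Set.mem_setOf_eq] at hω ⊢
      have hS := hSeq ω
      have hged : (n : ℝ) ≤ ∑ i ∈ Finset.range n, ((M.Xc i j ω) ^ 2 / M.lam j - 1) := by
        rw [hS]; nlinarith
      exact pow_le_pow_left₀ npos.le hged _
    have hle : (M.P {ω | w₁ ≤ M.lamhat n j ω / M.lam j}).toReal
        ≤ (M.P {ω | (n : ℝ) ^ (2 * k) ≤ (∑ i ∈ Finset.range n,
            ((M.Xc i j ω) ^ 2 / M.lam j - 1)) ^ (2 * k)}).toReal :=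
      ENNReal.toReal_mono (measure_ne_top _ _) (measure_mono hsub)
    set T := (M.P {ω | (n : ℝ) ^ (2 * k) ≤ (∑ i ∈ Finset.range n,
        ((M.Xc i j ω) ^ 2 / M.lam j - 1)) ^ (2 * k)}).toReal with hT
    have hT0 : 0 ≤ T := ENNReal.toReal_nonneg
    have hnk : (0 : ℝ) < (n : ℝ) ^ k := pow_pos npos k
    have h1 : (T * (n : ℝ) ^ k) * (n : ℝ) ^ k ≤ (D * η) * (n : ℝ) ^ k := by
      have h := le_trans hmarkov hfb
      calc (T * (n : ℝ) ^ k) * (n : ℝ) ^ k = (n : ℝ) ^ (2 * k) * T := by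
            rw [two_mul, pow_add]; ring
        _ ≤ D * η * (n : ℝ) ^ k := h
        _ = (D * η) * (n : ℝ) ^ k := by ring
    have h2 : T * (n : ℝ) ^ k ≤ D * η := le_of_mul_le_mul_right h1 hnk
    calc (M.P {ω | w₁ ≤ M.lamhat n j ω / M.lam j}).toReal ≤ T := hle
      _ ≤ D * η / (n : ℝ) ^ k := by rw [le_div_iff₀ hnk]; exact h2
      _ ≤ D * 2 ^ (2 * k) * η / (n : ℝ) ^ k := by
          have h2k1 : (1 : ℝ) ≤ 2 ^ (2 * k) := one_le_pow₀ one_le_two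
          have hnum : D * η ≤ D * 2 ^ (2 * k) * η := by
            nlinarith [mul_nonneg (mul_nonneg hDpos.le
              (by linarith : (0:ℝ) ≤ η)) (by linarith : (0:ℝ) ≤ 2 ^ (2 * k) - 1)]
          exact (div_le_div_iff_of_pos_right hnk).mpr hnum
  · -- lower deviation
    intro j hj
    obtain ⟨hfint, hfb, hSeq⟩ := main j hj
    have hf0 : 0 ≤ᵐ[M.P] fun ω => (∑ i ∈ Finset.range n,
        ((M.Xc i j ω) ^ 2 / M.lam j - 1)) ^ (2 * k) :=
      ae_of_all _ fun ω => hev.pow_nonneg _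
    have hmarkov := mul_meas_ge_le_integral_of_nonneg hf0 hfint (((n : ℝ) / 2) ^ (2 * k))
    have hsub : {ω | M.lamhat n j ω / M.lam j < w₂}
        ⊆ {ω | ((n : ℝ) / 2) ^ (2 * k) ≤ (∑ i ∈ Finset.range n,
            ((M.Xc i j ω) ^ 2 / M.lam j - 1)) ^ (2 * k)} := by
      intro ω hω
      simp only [Set.mem_setOf_eq] at hω ⊢
      have hS := hSeq ω
      have h3 : (n : ℝ) * (M.lamhat n j ω / M.lam j) ≤ (n : ℝ) * (1 / 2) := by
        apply mul_le_mul_of_nonneg_left _ npos.le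
        linarith
      have hged : (n : ℝ) / 2 ≤ -(∑ i ∈ Finset.range n,
          ((M.Xc i j ω) ^ 2 / M.lam j - 1)) := by
        rw [hS]; nlinarith
      calc ((n : ℝ) / 2) ^ (2 * k)
          ≤ (-(∑ i ∈ Finset.range n, ((M.Xc i j ω) ^ 2 / M.lam j - 1))) ^ (2 * k) :=
            pow_le_pow_left₀ (by positivity) hged _
        _ = (∑ i ∈ Finset.range n, ((M.Xc i j ω) ^ 2 / M.lam j - 1)) ^ (2 * k) :=
            hev.neg_pow _
    have hle : (M.P {ω | M.lamhat n j ω / M.lam j < w₂}).toReal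
        ≤ (M.P {ω | ((n : ℝ) / 2) ^ (2 * k) ≤ (∑ i ∈ Finset.range n,
            ((M.Xc i j ω) ^ 2 / M.lam j - 1)) ^ (2 * k)}).toReal :=
      ENNReal.toReal_mono (measure_ne_top _ _) (measure_mono hsub)
    set T := (M.P {ω | ((n : ℝ) / 2) ^ (2 * k) ≤ (∑ i ∈ Finset.range n,
        ((M.Xc i j ω) ^ 2 / M.lam j - 1)) ^ (2 * k)}).toReal with hT
    have hT0 : 0 ≤ T := ENNReal.toReal_nonneg
    have hnk : (0 : ℝ) < (n : ℝ) ^ k := pow_pos npos k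
    have h2pk : (0 : ℝ) < 2 ^ (2 * k) := by positivity
    have h1 : (T * (n : ℝ) ^ k) * (n : ℝ) ^ k ≤ (D * 2 ^ (2 * k) * η) * (n : ℝ) ^ k := by
      have h := le_trans hmarkov hfb
      rw [div_pow] at h
      calc (T * (n : ℝ) ^ k) * (n : ℝ) ^ k = (n : ℝ) ^ (2 * k) * T := by
            rw [two_mul, pow_add]; ring
        _ = 2 ^ (2 * k) * (((n : ℝ) ^ (2 * k) / 2 ^ (2 * k)) * T) := by
            field_simp
        _ ≤ 2 ^ (2 * k) * (D * η * (n : ℝ) ^ k) :=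
            mul_le_mul_of_nonneg_left (by convert h using 2; rw [hT, div_pow]; rfl) h2pk.le
        _ = (D * 2 ^ (2 * k) * η) * (n : ℝ) ^ k := by ring
    have h2 : T * (n : ℝ) ^ k ≤ D * 2 ^ (2 * k) * η := le_of_mul_le_mul_right h1 hnk
    calc (M.P {ω | M.lamhat n j ω / M.lam j < w₂}).toReal ≤ T := hle
      _ ≤ D * 2 ^ (2 * k) * η / (n : ℝ) ^ k := by rw [le_div_iff₀ hnk]; exact h2


end CircularFLM
end
end

section
/- Let k ≥ 1 and X ∈ 𝒳^{12k}_{η}. Then there exists a numerical constant C_k > 0 depending only on k such that for every j ≥ 1 and every n ≥ 1: E( | λ_j/λ̂_j − 1 |^{2k}·1{λ̂_j ≥ 1/n} ) ≤ C_k·η·( λ_j^{2k} + 1 )·n^{−k}, where λ̂_j := n⁻¹Σ_{i=1}^n [Xᵢ]_j². -/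
open Filter Real

noncomputable section

namespace CircularFLM

open MeasureTheory ProbabilityTheory

/-- pointwise interpolation: for `0 ≤ u`, `1 ≤ θ`, `s ≤ b`: `u^s ≤ θ^s + u^b·θ^s/θ^b`. -/
lemma pow_le_interp {u θ : ℝ} (hu : 0 ≤ u) (hθ : 1 ≤ θ) {s b : ℕ} (hsb : s ≤ b) :
    u ^ s ≤ θ ^ s + u ^ b * θ ^ s / θ ^ b := by
  have hθ0 : (0:ℝ) < θ := lt_of_lt_of_le one_pos hθ
  rcases le_total u θ with h | h
  · have h1 : u ^ s ≤ θ ^ s := pow_le_pow_left₀ hu h s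
    have h2 : 0 ≤ u ^ b * θ ^ s / θ ^ b := by positivity
    linarith
  · have h1 : θ ^ s ≤ u ^ s * 1 := by
      simpa using pow_le_pow_left₀ hθ0.le h s
    have key : u ^ s * θ ^ b ≤ u ^ b * θ ^ s := by
      have hb : b = s + (b - s) := by omega
      rw [hb, pow_add, pow_add]
      have h2 : θ ^ (b - s) ≤ u ^ (b - s) := pow_le_pow_left₀ hθ0.le h _
      have h3 : 0 ≤ u ^ s * θ ^ s := by positivity
      calc u ^ s * (θ ^ s * θ ^ (b-s)) = (u ^ s * θ ^ s) * θ ^ (b-s) := by ring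
        _ ≤ (u ^ s * θ ^ s) * u ^ (b-s) := by
            exact mul_le_mul_of_nonneg_left h2 h3
        _ = u ^ s * u ^ (b-s) * θ ^ s := by ring
    have hpb : (0:ℝ) < θ ^ b := by positivity
    have h4 : u ^ s ≤ u ^ b * θ ^ s / θ ^ b := by
      rw [le_div_iff₀ hpb]; exact key
    have h5 : (0:ℝ) ≤ θ ^ s := by positivity
    linarith

/-- `x^(q+1) + x^q ≤ (x+1)^(q+1)` for `x ≥ 0`. -/
lemma pow_succ_add_pow_le {x : ℝ} (hx : 0 ≤ x) (q : ℕ) :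
    x ^ (q + 1) + x ^ q ≤ (x + 1) ^ (q + 1) := by
  induction q with
  | zero => simp
  | succ q ih =>
    have h1 : (x + 1) ^ (q + 1 + 1) = (x + 1) ^ (q + 1) * (x + 1) := by ring
    have h2 : (x ^ (q+1) + x ^ q) * (x + 1) ≤ (x + 1) ^ (q + 1) * (x + 1) := by
      apply mul_le_mul_of_nonneg_right ih (by linarith)
    have h3 : x ^ (q + 2) + x ^ (q + 1) ≤ (x ^ (q+1) + x ^ q) * (x + 1) := by
      have : (x ^ (q+1) + x ^ q) * (x + 1) = x ^ (q+2) + x ^ (q+1) + (x ^ (q+1) + x ^ q) := by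
        ring
      rw [this]
      have : (0:ℝ) ≤ x ^ (q+1) + x ^ q := by positivity
      linarith
    calc x ^ (q + 1 + 1) + x ^ (q + 1) ≤ (x ^ (q+1) + x ^ q) * (x + 1) := h3
      _ ≤ (x + 1) ^ (q+1) * (x + 1) := h2
      _ = (x + 1) ^ (q + 1 + 1) := by ring

/-- weighted AM-GM pointwise: `2θ·x^(2a+1) ≤ θ²·x^(2a) + x^(2a+2)` for `x ≥ 0`. -/
lemma odd_pow_le {x θ : ℝ} (hx : 0 ≤ x) (hθ : 0 < θ) (a : ℕ) :
    x ^ (2*a+1) ≤ (θ * x ^ (2*a) + x ^ (2*a+2) / θ) / 2 := by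
  have key : 2 * θ * x ^ (2*a+1) ≤ θ^2 * x ^ (2*a) + x ^ (2*a+2) := by
    have h1 : x ^ (2*a) = (x^a)^2 := by rw [← pow_mul]; ring_nf
    have h2 : x ^ (2*a+1) = x^a * x^(a+1) := by rw [← pow_add]; ring_nf
    have h3 : x ^ (2*a+2) = (x^(a+1))^2 := by rw [← pow_mul]; ring_nf
    rw [h1, h2, h3]
    nlinarith [sq_nonneg (θ * x^a - x^(a+1))]
  rw [le_div_iff₀ (by norm_num : (0:ℝ) < 2), div_eq_mul_inv]
  have hθi : 0 < θ⁻¹ := inv_pos.mpr hθ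
  have h := mul_le_mul_of_nonneg_left key hθi.le
  have hid : θ⁻¹ * (2 * θ * x ^ (2*a+1)) = x ^ (2*a+1) * 2 := by
    field_simp
  calc x ^ (2*a+1) * 2 = θ⁻¹ * (2 * θ * x ^ (2*a+1)) := hid.symm
    _ ≤ θ⁻¹ * (θ^2 * x ^ (2*a) + x ^ (2*a+2)) := mul_le_mul_of_nonneg_left key hθi.le
    _ = θ * x ^ (2*a) + x ^ (2*a+2) * θ⁻¹ := by field_simp



lemma integrable_pow_of_abs {Ω : Type} [MeasurableSpace Ω] {P : MeasureTheory.Measure Ω}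
    {f : Ω → ℝ} (hf : Measurable f) {s : ℕ}
    (h : Integrable (fun ω => |f ω| ^ s) P) :
    Integrable (fun ω => f ω ^ s) P := by
  refine h.mono' ((hf.pow_const s).aestronglyMeasurable) ?_
  filter_upwards with ω
  rw [Real.norm_eq_abs, abs_pow]

lemma interp_moment {Ω : Type} [MeasurableSpace Ω] {P : MeasureTheory.Measure Ω}
    [IsProbabilityMeasure P] {g : Ω → ℝ} (hg : Measurable g) {b : ℕ} {η : ℝ}
    (hη : 1 ≤ η) (hb : 1 ≤ b)
    (hint : Integrable (fun ω => |g ω| ^ b) P)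
    (hbd : ∫ ω, |g ω| ^ b ∂P ≤ η) (s : ℕ) (hs : s ≤ b) :
    Integrable (fun ω => |g ω| ^ s) P ∧
      ∫ ω, |g ω| ^ s ∂P ≤ 2 * (η ^ ((1:ℝ)/b)) ^ s := by
  have hη0 : (0:ℝ) < η := lt_of_lt_of_le one_pos hη
  set θ : ℝ := η ^ ((1:ℝ)/b) with hθdef
  have hθ : 1 ≤ θ := Real.one_le_rpow hη (by positivity)
  have hθ0 : (0:ℝ) < θ := lt_of_lt_of_le one_pos hθ
  have hθb : θ ^ b = η := by
    rw [hθdef, ← Real.rpow_natCast (η ^ ((1:ℝ)/b)) b, ← Real.rpow_mul hη0.le]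
    rw [one_div, inv_mul_cancel₀ (Nat.cast_ne_zero.mpr (by omega)), Real.rpow_one]
  -- integrability
  have hmaj : Integrable (fun ω => 1 + |g ω| ^ b) P := (integrable_const 1).add hint
  have hint_s : Integrable (fun ω => |g ω| ^ s) P := by
    refine hmaj.mono' ((hg.abs.pow_const s).aestronglyMeasurable) ?_
    filter_upwards with ω
    rw [Real.norm_eq_abs, abs_of_nonneg (by positivity)]
    have := pow_le_interp (abs_nonneg (g ω)) (le_refl 1) hs  -- θ = 1
    simpa using this
  refine ⟨hint_s, ?_⟩
  have hptwise : ∀ ω, |g ω| ^ s ≤ θ ^ s + (θ ^ s / θ ^ b) * |g ω| ^ b := by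
    intro ω
    have := pow_le_interp (abs_nonneg (g ω)) hθ hs
    calc |g ω| ^ s ≤ θ ^ s + |g ω| ^ b * θ ^ s / θ ^ b := this
      _ = θ ^ s + (θ ^ s / θ ^ b) * |g ω| ^ b := by ring
  have hRHSint : Integrable (fun ω => θ ^ s + (θ ^ s / θ ^ b) * |g ω| ^ b) P :=
    (integrable_const _).add (hint.const_mul _)
  calc ∫ ω, |g ω| ^ s ∂P ≤ ∫ ω, (θ ^ s + (θ ^ s / θ ^ b) * |g ω| ^ b) ∂P :=
        integral_mono hint_s hRHSint hptwise
    _ = θ ^ s + (θ ^ s / θ ^ b) * ∫ ω, |g ω| ^ b ∂P := by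
        rw [integral_add (integrable_const _) (hint.const_mul _), integral_const,
          integral_const_mul]
        simp
    _ ≤ θ ^ s + (θ ^ s / θ ^ b) * η := by
        have h1 : (0:ℝ) ≤ θ ^ s / θ ^ b := by positivity
        nlinarith [mul_le_mul_of_nonneg_left hbd h1]
    _ = 2 * θ ^ s := by rw [hθb]; field_simp; ring



lemma abs_integral_le' {Ω : Type} [MeasurableSpace Ω] {P : MeasureTheory.Measure Ω}
    (f : Ω → ℝ) : |∫ ω, f ω ∂P| ≤ ∫ ω, |f ω| ∂P := by
  have := norm_integral_le_integral_norm (μ := P) f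
  simpa [Real.norm_eq_abs] using this

lemma sum_pow_integrable {Ω : Type} [MeasurableSpace Ω] {P : MeasureTheory.Measure Ω}
    [IsFiniteMeasure P] {W : ℕ → Ω → ℝ} {m : ℕ} (hWm : ∀ i, Measurable (W i))
    (hind : iIndepFun W P)
    (hmom : ∀ i s, s ≤ m → Integrable (fun ω => |W i ω| ^ s) P) :
    ∀ n, ∀ r ≤ m, Integrable (fun ω => (∑ i ∈ Finset.range n, W i ω) ^ r) P := by
  intro n
  induction n with
  | zero =>
    intro r _
    simp only [Finset.range_zero, Finset.sum_empty]
    exact integrable_const _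
  | succ n ih =>
    intro r hr
    have hexp : (fun ω => (∑ i ∈ Finset.range (n+1), W i ω) ^ r)
        = fun ω => ∑ t ∈ Finset.range (r+1),
            (∑ i ∈ Finset.range n, W i ω) ^ t * (W n ω) ^ (r - t) * (r.choose t : ℝ) := by
      funext ω
      rw [Finset.sum_range_succ, add_pow]
    rw [hexp]
    refine integrable_finset_sum _ (fun t ht => ?_)
    have hbase : IndepFun (fun ω => ∑ i ∈ Finset.range n, W i ω) (W n) P := by
      have h := hind.indepFun_sum_range_succ hWm n
      rwa [show (∑ j ∈ Finset.range n, W j) = fun ω => ∑ i ∈ Finset.range n, W i ω from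
        funext fun ω => Finset.sum_apply ω (Finset.range n) W] at h
    have hSW : IndepFun (fun ω => (∑ i ∈ Finset.range n, W i ω) ^ t)
        (fun ω => (W n ω) ^ (r - t)) P :=
      hbase.comp (measurable_id.pow_const t) (measurable_id.pow_const (r - t))
    have h1 : Integrable (fun ω => (∑ i ∈ Finset.range n, W i ω) ^ t) P :=
      ih t (le_trans (Nat.lt_succ_iff.mp (Finset.mem_range.mp ht)) hr)
    have h2 : Integrable (fun ω => (W n ω) ^ (r - t)) P :=
      integrable_pow_of_abs (hWm n) (hmom n (r - t) (by omega))
    exact (hSW.integrable_mul h1 h2).mul_const _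

lemma rosenthal {Ω : Type} [MeasurableSpace Ω] {P : MeasureTheory.Measure Ω}
    [IsProbabilityMeasure P]
    {W : ℕ → Ω → ℝ} {m : ℕ} {θ : ℝ} (hθ : 1 ≤ θ)
    (hWm : ∀ i, Measurable (W i))
    (hind : iIndepFun W P)
    (hmean : ∀ i, ∫ ω, W i ω ∂P = 0)
    (hmomI : ∀ i s, s ≤ 2*m → Integrable (fun ω => |W i ω| ^ s) P)
    (hmom : ∀ i s, s ≤ 2*m → ∫ ω, |W i ω| ^ s ∂P ≤ θ ^ s) :
    ∀ q, q ≤ m → ∀ n : ℕ,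
      ∫ ω, |∑ i ∈ Finset.range n, W i ω| ^ (2*q) ∂P
        ≤ 4 ^ (q*q) * θ ^ (2*q) * (n:ℝ) ^ q := by
  have hθ0 : (0:ℝ) < θ := lt_of_lt_of_le one_pos hθ
  have hSmeas : ∀ n : ℕ, Measurable (fun ω => ∑ i ∈ Finset.range n, W i ω) :=
    fun n => Finset.measurable_sum _ (fun i _ => hWm i)
  have hSint : ∀ n r, r ≤ 2*m →
      Integrable (fun ω => (∑ i ∈ Finset.range n, W i ω) ^ r) P :=
    sum_pow_integrable hWm hind (fun i s hs => hmomI i s hs)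
  have hSintabs : ∀ n r, r ≤ 2*m →
      Integrable (fun ω => |∑ i ∈ Finset.range n, W i ω| ^ r) P := by
    intro n r hr
    have := (hSint n r hr).abs
    simpa [abs_pow] using this
  intro q
  induction q using Nat.strong_induction_on with
  | _ q ih =>
    intro hqm n
    rcases Nat.eq_zero_or_pos q with rfl | hq
    · simp
    obtain ⟨p, rfl⟩ : ∃ p, q = p + 1 := ⟨q - 1, by omega⟩
    -- helper: moments of order ≤ 2p
    have helper : ∀ n : ℕ, 1 ≤ n → ∀ r, r ≤ 2*p →
        ∫ ω, |∑ i ∈ Finset.range n, W i ω| ^ r ∂P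
          ≤ 4 ^ (p*p) * θ ^ r * (n:ℝ) ^ p := by
      intro n hn r hr
      have hn1 : (1:ℝ) ≤ (n:ℝ) := by exact_mod_cast hn
      rcases Nat.even_or_odd r with ⟨a, ha⟩ | ⟨a, ha⟩
      · -- r = 2a
        have ha' : r = 2*a := by omega
        have hap : a ≤ p := by omega
        have := ih a (by omega) (by omega) n
        calc ∫ ω, |∑ i ∈ Finset.range n, W i ω| ^ r ∂P
            = ∫ ω, |∑ i ∈ Finset.range n, W i ω| ^ (2*a) ∂P := by rw [ha']
          _ ≤ 4 ^ (a*a) * θ ^ (2*a) * (n:ℝ) ^ a := this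
          _ ≤ 4 ^ (p*p) * θ ^ r * (n:ℝ) ^ p := by
              rw [ha']
              have h1 : (4:ℝ) ^ (a*a) ≤ 4 ^ (p*p) :=
                pow_le_pow_right₀ (by norm_num) (Nat.mul_le_mul hap hap)
              have h2 : (n:ℝ) ^ a ≤ (n:ℝ) ^ p := pow_le_pow_right₀ hn1 hap
              have hp1 : (0:ℝ) ≤ θ ^ (2*a) := by positivity
              have hp2 : (0:ℝ) ≤ (n:ℝ) ^ a := by positivity
              have hp3 : (0:ℝ) ≤ (4:ℝ) ^ (p*p) := by positivity
              calc (4:ℝ) ^ (a*a) * θ ^ (2*a) * (n:ℝ) ^ a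
                  ≤ 4 ^ (p*p) * θ ^ (2*a) * (n:ℝ) ^ a := by
                    exact mul_le_mul_of_nonneg_right (mul_le_mul_of_nonneg_right h1 hp1) hp2
                _ ≤ 4 ^ (p*p) * θ ^ (2*a) * (n:ℝ) ^ p := by
                    exact mul_le_mul_of_nonneg_left h2 (by positivity)
      · -- r = 2a+1 odd, r ≤ 2p so a + 1 ≤ p
        have ha' : r = 2*a + 1 := by omega
        have hap : a + 1 ≤ p := by omega
        have iha := ih a (by omega) (by omega) n
        have iha1 := ih (a+1) (by omega) (by omega) n
        have hptw : ∀ ω, |∑ i ∈ Finset.range n, W i ω| ^ r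
            ≤ (θ * |∑ i ∈ Finset.range n, W i ω| ^ (2*a)
              + |∑ i ∈ Finset.range n, W i ω| ^ (2*a+2) / θ) / 2 := by
          intro ω
          rw [ha']
          exact odd_pow_le (abs_nonneg _) hθ0 a
        have hint1 := hSintabs n (2*a) (by omega)
        have hint2 := hSintabs n (2*a+2) (by omega)
        have hintr := hSintabs n r (by omega)
        have hRint : Integrable (fun ω => (θ * |∑ i ∈ Finset.range n, W i ω| ^ (2*a)
            + |∑ i ∈ Finset.range n, W i ω| ^ (2*a+2) / θ) / 2) P :=
          ((hint1.const_mul θ).add (hint2.div_const θ)).div_const 2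
        calc ∫ ω, |∑ i ∈ Finset.range n, W i ω| ^ r ∂P
            ≤ ∫ ω, (θ * |∑ i ∈ Finset.range n, W i ω| ^ (2*a)
              + |∑ i ∈ Finset.range n, W i ω| ^ (2*a+2) / θ) / 2 ∂P :=
              integral_mono hintr hRint hptw
          _ = (θ * (∫ ω, |∑ i ∈ Finset.range n, W i ω| ^ (2*a) ∂P)
              + (∫ ω, |∑ i ∈ Finset.range n, W i ω| ^ (2*a+2) ∂P) / θ) / 2 := by
              rw [integral_div, integral_add (hint1.const_mul θ) (hint2.div_const θ),
                integral_const_mul, integral_div]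
          _ ≤ (θ * (4 ^ (a*a) * θ ^ (2*a) * (n:ℝ) ^ a)
              + (4 ^ ((a+1)*(a+1)) * θ ^ (2*(a+1)) * (n:ℝ) ^ (a+1)) / θ) / 2 := by
              have h1 : θ * (∫ ω, |∑ i ∈ Finset.range n, W i ω| ^ (2*a) ∂P)
                  ≤ θ * (4 ^ (a*a) * θ ^ (2*a) * (n:ℝ) ^ a) :=
                mul_le_mul_of_nonneg_left iha hθ0.le
              have h2 : (∫ ω, |∑ i ∈ Finset.range n, W i ω| ^ (2*a+2) ∂P) / θ
                  ≤ (4 ^ ((a+1)*(a+1)) * θ ^ (2*(a+1)) * (n:ℝ) ^ (a+1)) / θ := by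
                gcongr
                exact iha1
              linarith
          _ ≤ 4 ^ (p*p) * θ ^ r * (n:ℝ) ^ p := by
              rw [ha']
              have e1 : θ * (4 ^ (a*a) * θ ^ (2*a) * (n:ℝ) ^ a)
                  = 4 ^ (a*a) * θ ^ (2*a+1) * (n:ℝ) ^ a := by ring
              have e2 : (4 ^ ((a+1)*(a+1)) * θ ^ (2*(a+1)) * (n:ℝ) ^ (a+1)) / θ
                  = 4 ^ ((a+1)*(a+1)) * θ ^ (2*a+1) * (n:ℝ) ^ (a+1) := by
                field_simp
                ring
              rw [e1, e2]
              have hb1 : (4:ℝ) ^ (a*a) * θ ^ (2*a+1) * (n:ℝ) ^ a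
                  ≤ 4 ^ (p*p) * θ ^ (2*a+1) * (n:ℝ) ^ p := by
                have h1 : (4:ℝ) ^ (a*a) ≤ 4 ^ (p*p) :=
                  pow_le_pow_right₀ (by norm_num) (by nlinarith)
                have h2 : (n:ℝ) ^ a ≤ (n:ℝ) ^ p := pow_le_pow_right₀ hn1 (by omega)
                have : (0:ℝ) ≤ θ ^ (2*a+1) := by positivity
                calc (4:ℝ) ^ (a*a) * θ ^ (2*a+1) * (n:ℝ) ^ a
                    ≤ 4 ^ (p*p) * θ ^ (2*a+1) * (n:ℝ) ^ a :=
                      mul_le_mul_of_nonneg_right (mul_le_mul_of_nonneg_right h1 this)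
                        (by positivity)
                  _ ≤ 4 ^ (p*p) * θ ^ (2*a+1) * (n:ℝ) ^ p :=
                      mul_le_mul_of_nonneg_left h2 (by positivity)
              have hb2 : (4:ℝ) ^ ((a+1)*(a+1)) * θ ^ (2*a+1) * (n:ℝ) ^ (a+1)
                  ≤ 4 ^ (p*p) * θ ^ (2*a+1) * (n:ℝ) ^ p := by
                have h1 : (4:ℝ) ^ ((a+1)*(a+1)) ≤ 4 ^ (p*p) :=
                  pow_le_pow_right₀ (by norm_num) (Nat.mul_le_mul hap hap)
                have h2 : (n:ℝ) ^ (a+1) ≤ (n:ℝ) ^ p := pow_le_pow_right₀ hn1 (by omega)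
                have : (0:ℝ) ≤ θ ^ (2*a+1) := by positivity
                calc (4:ℝ) ^ ((a+1)*(a+1)) * θ ^ (2*a+1) * (n:ℝ) ^ (a+1)
                    ≤ 4 ^ (p*p) * θ ^ (2*a+1) * (n:ℝ) ^ (a+1) :=
                      mul_le_mul_of_nonneg_right (mul_le_mul_of_nonneg_right h1 this)
                        (by positivity)
                  _ ≤ 4 ^ (p*p) * θ ^ (2*a+1) * (n:ℝ) ^ p :=
                      mul_le_mul_of_nonneg_left h2 (by positivity)
              linarith
    -- main induction on n
    clear hq
    induction n with
    | zero => simp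
    | succ n ihn =>
      rcases Nat.eq_zero_or_pos n with rfl | hn1
      · -- n = 0 : S 1 = W 0
        have hone : (fun ω => |∑ i ∈ Finset.range 1, W i ω| ^ (2*(p+1)))
            = fun ω => |W 0 ω| ^ (2*(p+1)) := by
          funext ω; rw [Finset.sum_range_one]
        rw [hone]
        have hm0 := hmom 0 (2*(p+1)) (by omega)
        have h4 : (1:ℝ) ≤ 4 ^ ((p+1)*(p+1)) := one_le_pow₀ (by norm_num)
        have hθq : (0:ℝ) < θ ^ (2*(p+1)) := by positivity
        refine le_trans hm0 ?_
        push_cast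
        norm_num
        nlinarith
      · -- n ≥ 1
        have hn1' : (1:ℝ) ≤ (n:ℝ) := by exact_mod_cast hn1
        have hbase : IndepFun (fun ω => ∑ i ∈ Finset.range n, W i ω) (W n) P := by
          have h := hind.indepFun_sum_range_succ hWm n
          rwa [show (∑ j ∈ Finset.range n, W j) = fun ω => ∑ i ∈ Finset.range n, W i ω from
            funext fun ω => Finset.sum_apply ω (Finset.range n) W] at h
        have hWintI : ∀ t, t ≤ 2*m → Integrable (fun ω => (W n ω) ^ t) P :=
          fun t ht => integrable_pow_of_abs (hWm n) (hmomI n t ht)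
        have hSW : ∀ r t : ℕ, IndepFun (fun ω => (∑ i ∈ Finset.range n, W i ω) ^ r)
            (fun ω => (W n ω) ^ t) P := fun r t =>
          hbase.comp (measurable_id.pow_const r) (measurable_id.pow_const t)
        have hprodint : ∀ r ∈ Finset.range (2*(p+1)+1),
            Integrable (fun ω => (∑ i ∈ Finset.range n, W i ω) ^ r * (W n ω) ^ (2*(p+1) - r)
              * (((2*(p+1)).choose r : ℕ) : ℝ)) P := by
          intro r hr
          have hr' : r ≤ 2*(p+1) := by
            have := Finset.mem_range.mp hr; omega
          exact ((hSW r (2*(p+1)-r)).integrable_mul (hSint n r (by omega))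
            (hWintI (2*(p+1)-r) (by omega))).mul_const _
        have hexp : ∫ ω, |∑ i ∈ Finset.range (n+1), W i ω| ^ (2*(p+1)) ∂P
            = ∑ r ∈ Finset.range (2*(p+1)+1), (((2*(p+1)).choose r : ℕ) : ℝ)
              * ((∫ ω, (∑ i ∈ Finset.range n, W i ω) ^ r ∂P)
                * (∫ ω, (W n ω) ^ (2*(p+1)-r) ∂P)) := by
          calc ∫ ω, |∑ i ∈ Finset.range (n+1), W i ω| ^ (2*(p+1)) ∂P
              = ∫ ω, (∑ i ∈ Finset.range (n+1), W i ω) ^ (2*(p+1)) ∂P := by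
                congr 1; funext ω; exact (even_two_mul (p+1)).pow_abs _
            _ = ∫ ω, ∑ r ∈ Finset.range (2*(p+1)+1), (∑ i ∈ Finset.range n, W i ω) ^ r
                  * (W n ω) ^ (2*(p+1)-r) * (((2*(p+1)).choose r : ℕ) : ℝ) ∂P := by
                congr 1; funext ω; rw [Finset.sum_range_succ, add_pow]
            _ = ∑ r ∈ Finset.range (2*(p+1)+1), ∫ ω, (∑ i ∈ Finset.range n, W i ω) ^ r
                  * (W n ω) ^ (2*(p+1)-r) * (((2*(p+1)).choose r : ℕ) : ℝ) ∂P :=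
                integral_finset_sum _ hprodint
            _ = _ := by
                refine Finset.sum_congr rfl (fun r hr => ?_)
                have hr' : r ≤ 2*(p+1) := by
                  have := Finset.mem_range.mp hr; omega
                have h1 : ∫ ω, (∑ i ∈ Finset.range n, W i ω) ^ r * (W n ω) ^ (2*(p+1)-r)
                      * (((2*(p+1)).choose r : ℕ) : ℝ) ∂P
                    = (∫ ω, (∑ i ∈ Finset.range n, W i ω) ^ r * (W n ω) ^ (2*(p+1)-r) ∂P)
                      * (((2*(p+1)).choose r : ℕ) : ℝ) := integral_mul_const _ _
                have h2 : ∫ ω, (∑ i ∈ Finset.range n, W i ω) ^ r * (W n ω) ^ (2*(p+1)-r) ∂P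
                    = (∫ ω, (∑ i ∈ Finset.range n, W i ω) ^ r ∂P)
                      * (∫ ω, (W n ω) ^ (2*(p+1)-r) ∂P) :=
                  (hSW r (2*(p+1)-r)).integral_fun_mul_eq_mul_integral (hSint n r (by omega)).aestronglyMeasurable
                    (hWintI (2*(p+1)-r) (by omega)).aestronglyMeasurable
                rw [h1, h2]
                ring
        -- split off the top two terms
        set F : ℕ → ℝ := fun r => (((2*(p+1)).choose r : ℕ) : ℝ)
          * ((∫ ω, (∑ i ∈ Finset.range n, W i ω) ^ r ∂P)
            * (∫ ω, (W n ω) ^ (2*(p+1)-r) ∂P)) with hF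
        have hsplit : ∑ r ∈ Finset.range (2*(p+1)+1), F r
            = (∑ r ∈ Finset.range (2*p+1), F r) + F (2*p+1) + F (2*p+2) := by
          rw [show 2*(p+1)+1 = (2*p+1)+1+1 by omega, Finset.sum_range_succ,
            Finset.sum_range_succ]
        have hF1 : F (2*p+1) = 0 := by
          have h1 : 2*(p+1) - (2*p+1) = 1 := by omega
          rw [hF]
          simp only [h1, pow_one, hmean n]
          ring
        have hF2 : F (2*p+2) ≤ 4 ^ ((p+1)*(p+1)) * θ ^ (2*(p+1)) * (n:ℝ) ^ (p+1) := by
          have h1 : 2*(p+1) - (2*p+2) = 0 := by omega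
          have h2 : (2*(p+1)).choose (2*p+2) = 1 := by
            rw [show 2*(p+1) = 2*p+2 by omega]; exact Nat.choose_self _
          have h3 : ∫ ω, (∑ i ∈ Finset.range n, W i ω) ^ (2*p+2) ∂P
              = ∫ ω, |∑ i ∈ Finset.range n, W i ω| ^ (2*(p+1)) ∂P := by
            congr 1; funext ω
            rw [show 2*p+2 = 2*(p+1) by omega]
            exact ((even_two_mul (p+1)).pow_abs _).symm
          rw [hF]
          simp only [h1, h2, pow_zero, Nat.cast_one, one_mul]
          have h4 : ∫ (_ : Ω), (1:ℝ) ∂P = 1 := by simp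
          rw [h4, mul_one, h3]
          exact ihn
        have hsum : ∑ r ∈ Finset.range (2*p+1), F r
            ≤ 4 ^ (p+1) * (4 ^ (p*p) * θ ^ (2*(p+1)) * (n:ℝ) ^ p) := by
          have hterm : ∀ r ∈ Finset.range (2*p+1),
              F r ≤ (((2*(p+1)).choose r : ℕ) : ℝ)
                * (4 ^ (p*p) * θ ^ (2*(p+1)) * (n:ℝ) ^ p) := by
            intro r hr
            have hr' : r ≤ 2*p := by have := Finset.mem_range.mp hr; omega
            have hC : (0:ℝ) ≤ (((2*(p+1)).choose r : ℕ) : ℝ) := by positivity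
            have hES : |∫ ω, (∑ i ∈ Finset.range n, W i ω) ^ r ∂P|
                ≤ 4 ^ (p*p) * θ ^ r * (n:ℝ) ^ p := by
              refine le_trans (abs_integral_le' _) (le_trans ?_ (helper n hn1 r hr'))
              apply le_of_eq
              congr 1; funext ω; rw [abs_pow]
            have hEW : |∫ ω, (W n ω) ^ (2*(p+1)-r) ∂P| ≤ θ ^ (2*(p+1)-r) := by
              refine le_trans (abs_integral_le' _)
                (le_trans ?_ (hmom n (2*(p+1)-r) (by omega)))
              apply le_of_eq; congr 1; funext ω; rw [abs_pow]
            have habs : F r ≤ (((2*(p+1)).choose r : ℕ) : ℝ)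
                * (|∫ ω, (∑ i ∈ Finset.range n, W i ω) ^ r ∂P|
                  * |∫ ω, (W n ω) ^ (2*(p+1)-r) ∂P|) := by
              rw [hF]
              refine mul_le_mul_of_nonneg_left ?_ hC
              rw [← abs_mul]
              exact le_abs_self _
            refine le_trans habs (mul_le_mul_of_nonneg_left ?_ hC)
            calc |∫ ω, (∑ i ∈ Finset.range n, W i ω) ^ r ∂P|
                  * |∫ ω, (W n ω) ^ (2*(p+1)-r) ∂P|
                ≤ (4 ^ (p*p) * θ ^ r * (n:ℝ) ^ p) * θ ^ (2*(p+1)-r) :=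
                  mul_le_mul hES hEW (abs_nonneg _) (by positivity)
              _ = 4 ^ (p*p) * (θ ^ r * θ ^ (2*(p+1)-r)) * (n:ℝ) ^ p := by ring
              _ = 4 ^ (p*p) * θ ^ (2*(p+1)) * (n:ℝ) ^ p := by
                  rw [← pow_add, show r + (2*(p+1)-r) = 2*(p+1) by omega]
          refine le_trans (Finset.sum_le_sum hterm) ?_
          rw [← Finset.sum_mul]
          refine mul_le_mul_of_nonneg_right ?_ (by positivity)
          have hch : (∑ r ∈ Finset.range (2*p+1), ((2*(p+1)).choose r)) ≤ 2 ^ (2*(p+1)) := by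
            calc ∑ r ∈ Finset.range (2*p+1), ((2*(p+1)).choose r)
                ≤ ∑ r ∈ Finset.range (2*(p+1)+1), ((2*(p+1)).choose r) :=
                  Finset.sum_le_sum_of_subset (Finset.range_subset_range.mpr (by omega))
              _ = 2 ^ (2*(p+1)) := Nat.sum_range_choose _
          calc (∑ r ∈ Finset.range (2*p+1), (((2*(p+1)).choose r : ℕ) : ℝ))
              = ((∑ r ∈ Finset.range (2*p+1), ((2*(p+1)).choose r) : ℕ) : ℝ) := by
                push_cast; ring
            _ ≤ ((2 ^ (2*(p+1)) : ℕ) : ℝ) := by exact_mod_cast hch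
            _ = 4 ^ (p+1) := by
                push_cast
                rw [pow_mul]
                norm_num
        have hpow : (n:ℝ) ^ (p+1) + (n:ℝ) ^ p ≤ ((n:ℝ)+1) ^ (p+1) :=
          pow_succ_add_pow_le (by positivity) p
        have hcoef : (4:ℝ) ^ (p+1) * 4 ^ (p*p) ≤ 4 ^ ((p+1)*(p+1)) := by
          rw [← pow_add]
          exact pow_le_pow_right₀ (by norm_num) (by nlinarith)
        rw [hexp, hsplit, hF1, add_zero]
        have hfin : (∑ r ∈ Finset.range (2*p+1), F r) + F (2*p+2)
            ≤ 4 ^ ((p+1)*(p+1)) * θ ^ (2*(p+1)) * ((n:ℝ)+1) ^ (p+1) := by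
          have h5 : (4:ℝ) ^ (p+1) * (4 ^ (p*p) * θ ^ (2*(p+1)) * (n:ℝ) ^ p)
              ≤ 4 ^ ((p+1)*(p+1)) * θ ^ (2*(p+1)) * (n:ℝ) ^ p := by
            have : (4:ℝ) ^ (p+1) * (4 ^ (p*p) * θ ^ (2*(p+1)) * (n:ℝ) ^ p)
                = ((4:ℝ) ^ (p+1) * 4 ^ (p*p)) * θ ^ (2*(p+1)) * (n:ℝ) ^ p := by ring
            rw [this]
            refine mul_le_mul_of_nonneg_right
              (mul_le_mul_of_nonneg_right hcoef (by positivity)) (by positivity)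
          calc (∑ r ∈ Finset.range (2*p+1), F r) + F (2*p+2)
              ≤ 4 ^ ((p+1)*(p+1)) * θ ^ (2*(p+1)) * (n:ℝ) ^ p
                + 4 ^ ((p+1)*(p+1)) * θ ^ (2*(p+1)) * (n:ℝ) ^ (p+1) :=
                add_le_add (le_trans hsum h5) hF2
            _ = 4 ^ ((p+1)*(p+1)) * θ ^ (2*(p+1)) * ((n:ℝ) ^ (p+1) + (n:ℝ) ^ p) := by ring
            _ ≤ 4 ^ ((p+1)*(p+1)) * θ ^ (2*(p+1)) * ((n:ℝ)+1) ^ (p+1) :=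
                mul_le_mul_of_nonneg_left hpow (by positivity)
        refine le_trans hfin (le_of_eq ?_)
        push_cast
        ring




lemma add_pow_le2 {a b : ℝ} (ha : 0 ≤ a) (hb : 0 ≤ b) (s : ℕ) :
    (a + b) ^ s ≤ 2 ^ s * (a ^ s + b ^ s) := by
  rcases le_total a b with h | h
  · calc (a + b) ^ s ≤ (2 * b) ^ s := pow_le_pow_left₀ (by linarith) (by linarith) s
      _ = 2 ^ s * b ^ s := mul_pow _ _ _
      _ ≤ 2 ^ s * (a ^ s + b ^ s) := by
          have : (0:ℝ) ≤ a ^ s := by positivity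
          have h2 : (0:ℝ) ≤ (2:ℝ) ^ s := by positivity
          nlinarith
  · calc (a + b) ^ s ≤ (2 * a) ^ s := pow_le_pow_left₀ (by linarith) (by linarith) s
      _ = 2 ^ s * a ^ s := mul_pow _ _ _
      _ ≤ 2 ^ s * (a ^ s + b ^ s) := by
          have : (0:ℝ) ≤ b ^ s := by positivity
          have h2 : (0:ℝ) ≤ (2:ℝ) ^ s := by positivity
          nlinarith

lemma ptwise_bound (K : ℕ) {lam lh t nr : ℝ} (hlam : 0 < lam) (hnr : 1 ≤ nr)
    (ht : lh / lam - 1 = t) :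
    (if 1/nr ≤ lh then |lam/lh - 1| ^ (2*K) else 0)
      ≤ 4 ^ K * |t| ^ (2*K) + (nr*lam+1) ^ (2*K) * (2 ^ (6*K) * |t| ^ (6*K)) := by
  split_ifs with h
  · have hnr0 : (0:ℝ) < nr := lt_of_lt_of_le one_pos hnr
    have hlh : (0:ℝ) < lh := lt_of_lt_of_le (by positivity) h
    rcases le_or_gt (1/2 : ℝ) (lh/lam) with hcase | hcase
    · have h1 : |lam/lh - 1| ≤ 2*|t| := by
        subst ht
        have e1 : lam/lh - 1 = (lam - lh)/lh := by field_simp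
        have e2 : lh/lam - 1 = (lh - lam)/lam := by field_simp
        rw [e1, e2, abs_div, abs_div, abs_of_pos hlh, abs_of_pos hlam]
        rw [div_le_iff₀ hlh]
        have habs : |lam - lh| = |lh - lam| := abs_sub_comm _ _
        rw [habs]
        have hcase' : lam ≤ 2 * lh := by
          rw [le_div_iff₀ hlam] at hcase
          linarith
        have h0 : 0 ≤ |lh - lam| := abs_nonneg _
        calc |lh - lam| = (|lh - lam| / lam) * lam := by field_simp
          _ ≤ (|lh - lam| / lam) * (2 * lh) := by
              exact mul_le_mul_of_nonneg_left hcase' (by positivity)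
          _ = 2 * (|lh - lam| / lam) * lh := by ring
      have h2 : |lam/lh - 1| ^ (2*K) ≤ (2*|t|) ^ (2*K) :=
        pow_le_pow_left₀ (abs_nonneg _) h1 _
      have h3 : ((2:ℝ)*|t|) ^ (2*K) = 4 ^ K * |t| ^ (2*K) := by
        rw [mul_pow, show (2:ℝ) ^ (2*K) = 4 ^ K by rw [pow_mul]; norm_num]
      have h4 : (0:ℝ) ≤ (nr*lam+1) ^ (2*K) * (2 ^ (6*K) * |t| ^ (6*K)) := by positivity
      calc |lam/lh - 1| ^ (2*K) ≤ (2*|t|) ^ (2*K) := h2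
        _ = 4 ^ K * |t| ^ (2*K) := h3
        _ ≤ _ := by linarith
    · have ht2 : 1/2 ≤ |t| := by
        rw [← ht, abs_of_neg (by linarith)]
        linarith
      have h2 : (1:ℝ) ≤ 2 ^ (6*K) * |t| ^ (6*K) := by
        calc (1:ℝ) = 1 ^ (6*K) := (one_pow _).symm
          _ ≤ (2*|t|) ^ (6*K) := pow_le_pow_left₀ (by norm_num) (by linarith) _
          _ = 2 ^ (6*K) * |t| ^ (6*K) := mul_pow _ _ _
      have h3 : |lam/lh - 1| ≤ nr*lam + 1 := by
        have h4 : (1:ℝ) ≤ nr * lh := by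
          rw [div_le_iff₀ hnr0] at h
          linarith
        have hl : lam/lh ≤ nr*lam := by
          rw [div_le_iff₀ hlh]
          nlinarith
        have h5 : (0:ℝ) ≤ lam/lh := by positivity
        rw [abs_le]
        constructor <;> nlinarith
      have h6 : (0:ℝ) ≤ 4 ^ K * |t| ^ (2*K) := by positivity
      calc |lam/lh - 1| ^ (2*K) ≤ (nr*lam+1) ^ (2*K) :=
            pow_le_pow_left₀ (abs_nonneg _) h3 _
        _ = (nr*lam+1) ^ (2*K) * 1 := (mul_one _).symm
        _ ≤ (nr*lam+1) ^ (2*K) * (2 ^ (6*K) * |t| ^ (6*K)) :=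
            mul_le_mul_of_nonneg_left h2 (by positivity)
        _ ≤ _ := by linarith
  · positivity


set_option maxHeartbeats 2000000 in
/-- Lemma A.4, bound (A.11): moments of `λ_j/λ̂_j − 1` on the event `{λ̂_j ≥ 1/n}`. -/
theorem statement15 :
    ∀ k : ℕ, 1 ≤ k → ∃ C : ℝ, 0 < C ∧
      ∀ (M : Model) (η : ℝ), 1 ≤ η → M.momX (12 * k) η →
        ∀ j n : ℕ, 1 ≤ j → 1 ≤ n →
          ∫ ω, (if 1 / (n : ℝ) ≤ M.lamhat n j ω
              then |M.lam j / M.lamhat n j ω - 1| ^ (2 * k) else 0) ∂M.P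
            ≤ C * η * (M.lam j ^ (2 * k) + 1) / (n : ℝ) ^ k := by
  intro k hk
  refine ⟨4 ^ (k + k*k) * 6 ^ (2*k) + 2 ^ (8*k) * 4 ^ (9*(k*k)) * 6 ^ (6*k),
    by positivity, ?_⟩
  intro M η hη hmomX j n hj hn
  have hlam : 0 < M.lam j := M.lam_pos j hj
  have hn0 : (0:ℝ) < n := by exact_mod_cast hn
  have hn1 : (1:ℝ) ≤ n := by exact_mod_cast hn
  -- normalized increments
  set W : ℕ → M.Ω → ℝ := fun i ω => (M.Xc i j ω) ^ 2 / M.lam j - 1 with hWdef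
  have hWm : ∀ i, Measurable (W i) :=
    fun i => (((M.meas_Xc i j).pow_const 2).div_const (M.lam j)).sub_const 1
  -- independence
  have hind : iIndepFun W M.P := by
    have hg : Measurable (fun p : ℝ × (ℕ → ℝ) => (p.2 j) ^ 2 / M.lam j - 1) :=
      ((((measurable_pi_apply j).comp measurable_snd :
        Measurable fun p : ℝ × (ℕ → ℝ) => p.2 j).pow_const 2).div_const
        (M.lam j)).sub_const 1
    exact M.iid_indep.comp _ (fun _ => hg)
  -- transfer of moments between copies
  have hmi : ∀ l : ℕ, Measurable (fun ω => ((M.eps l ω : ℝ), fun j' => M.Xc l j' ω)) :=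
    fun l => (M.meas_eps l).prodMk (measurable_pi_lambda _ (fun j' => M.meas_Xc l j'))
  have htransI : ∀ (ψ : ℝ → ℝ), Measurable ψ → ∀ i : ℕ,
      Integrable (fun ω => ψ (M.Xc 0 j ω)) M.P →
      Integrable (fun ω => ψ (M.Xc i j ω)) M.P := by
    intro ψ hψ i h
    have hφ : Measurable (fun p : ℝ × (ℕ → ℝ) => ψ (p.2 j)) :=
      hψ.comp ((measurable_pi_apply j).comp measurable_snd)
    have h1 : Integrable (fun p : ℝ × (ℕ → ℝ) => ψ (p.2 j))
        (MeasureTheory.Measure.map (fun ω => ((M.eps 0 ω : ℝ), fun j' => M.Xc 0 j' ω)) M.P) :=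
      (integrable_map_measure hφ.aestronglyMeasurable (hmi 0).aemeasurable).mpr h
    rw [← M.iid_ident i] at h1
    exact (integrable_map_measure hφ.aestronglyMeasurable (hmi i).aemeasurable).mp h1
  have htransE : ∀ (ψ : ℝ → ℝ), Measurable ψ → ∀ i : ℕ,
      ∫ ω, ψ (M.Xc i j ω) ∂M.P = ∫ ω, ψ (M.Xc 0 j ω) ∂M.P := by
    intro ψ hψ i
    have hφ : Measurable (fun p : ℝ × (ℕ → ℝ) => ψ (p.2 j)) :=
      hψ.comp ((measurable_pi_apply j).comp measurable_snd)
    have e1 : ∫ ω, ψ (M.Xc i j ω) ∂M.P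
        = ∫ p, ψ (p.2 j) ∂(MeasureTheory.Measure.map
            (fun ω => ((M.eps i ω : ℝ), fun j' => M.Xc i j' ω)) M.P) :=
      (integral_map (hmi i).aemeasurable hφ.aestronglyMeasurable).symm
    rw [e1, M.iid_ident i, integral_map (hmi 0).aemeasurable hφ.aestronglyMeasurable]
  -- moments of the normalized Fourier coefficient
  have hgm : Measurable (fun ω => M.Xc 0 j ω / Real.sqrt (M.lam j)) :=
    (M.meas_Xc 0 j).div_const _
  obtain ⟨hgint12, hgbd12⟩ := hmomX j hj
  have hinterp : ∀ s ≤ 12*k,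
      Integrable (fun ω => |M.Xc 0 j ω / Real.sqrt (M.lam j)| ^ s) M.P ∧
      ∫ ω, |M.Xc 0 j ω / Real.sqrt (M.lam j)| ^ s ∂M.P
        ≤ 2 * (η ^ ((1:ℝ)/((12*k : ℕ) : ℝ))) ^ s :=
    fun s hs => interp_moment hgm hη (by omega) hgint12 hgbd12 s hs
  set θ0 : ℝ := η ^ ((1:ℝ)/((12*k : ℕ) : ℝ)) with hθ0def
  have hθ01 : 1 ≤ θ0 := Real.one_le_rpow hη (by positivity)
  set θ : ℝ := 6 * θ0 ^ 2 with hθdef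
  have hθ1 : 1 ≤ θ := by nlinarith
  -- pointwise identity |Xc/√λ|² = Xc²/λ
  have hgsq : ∀ x : ℝ, |x / Real.sqrt (M.lam j)| ^ 2 = x ^ 2 / M.lam j := by
    intro x
    rw [sq_abs, div_pow, Real.sq_sqrt hlam.le]
  -- moments of W 0
  have hW0 : ∀ s ≤ 6*k, Integrable (fun ω => |W 0 ω| ^ s) M.P ∧
      ∫ ω, |W 0 ω| ^ s ∂M.P ≤ θ ^ s := by
    intro s hs
    rcases Nat.eq_zero_or_pos s with rfl | hs1
    · simp
    obtain ⟨hgint, hgbd⟩ := hinterp (2*s) (by omega)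
    have hptw : ∀ ω, |W 0 ω| ^ s
        ≤ 2 ^ s * |M.Xc 0 j ω / Real.sqrt (M.lam j)| ^ (2*s) + 2 ^ s := by
      intro ω
      have hZ : (M.Xc 0 j ω) ^ 2 / M.lam j
          = |M.Xc 0 j ω / Real.sqrt (M.lam j)| ^ 2 := (hgsq _).symm
      have h1 : |W 0 ω| ≤ |M.Xc 0 j ω / Real.sqrt (M.lam j)| ^ 2 + 1 := by
        rw [hWdef]
        simp only []
        rw [hZ]
        calc |(|M.Xc 0 j ω / Real.sqrt (M.lam j)| ^ 2) - 1|
            ≤ |(|M.Xc 0 j ω / Real.sqrt (M.lam j)| ^ 2)| + |(1:ℝ)| := abs_sub _ _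
          _ = |M.Xc 0 j ω / Real.sqrt (M.lam j)| ^ 2 + 1 := by
              rw [abs_of_nonneg (by positivity), abs_one]
      calc |W 0 ω| ^ s ≤ (|M.Xc 0 j ω / Real.sqrt (M.lam j)| ^ 2 + 1) ^ s :=
            pow_le_pow_left₀ (abs_nonneg _) h1 s
        _ ≤ 2 ^ s * ((|M.Xc 0 j ω / Real.sqrt (M.lam j)| ^ 2) ^ s + 1 ^ s) :=
            add_pow_le2 (by positivity) (by norm_num) s
        _ = 2 ^ s * |M.Xc 0 j ω / Real.sqrt (M.lam j)| ^ (2*s) + 2 ^ s := by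
            rw [← pow_mul, one_pow]
            ring_nf
    have hmaj : Integrable (fun ω =>
        2 ^ s * |M.Xc 0 j ω / Real.sqrt (M.lam j)| ^ (2*s) + 2 ^ s) M.P :=
      (hgint.const_mul _).add (integrable_const _)
    have hWint : Integrable (fun ω => |W 0 ω| ^ s) M.P := by
      refine hmaj.mono' (((hWm 0).abs.pow_const s).aestronglyMeasurable) ?_
      filter_upwards with ω
      rw [Real.norm_eq_abs, abs_of_nonneg (by positivity)]
      exact hptw ω
    refine ⟨hWint, ?_⟩
    have h3s : (3:ℝ) ≤ 3 ^ s := le_self_pow₀ (by norm_num) (by omega)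
    have hθ0s : (1:ℝ) ≤ θ0 ^ (2*s) := one_le_pow₀ hθ01
    calc ∫ ω, |W 0 ω| ^ s ∂M.P
        ≤ ∫ ω, (2 ^ s * |M.Xc 0 j ω / Real.sqrt (M.lam j)| ^ (2*s) + 2 ^ s) ∂M.P :=
          integral_mono hWint hmaj hptw
      _ = 2 ^ s * (∫ ω, |M.Xc 0 j ω / Real.sqrt (M.lam j)| ^ (2*s) ∂M.P) + 2 ^ s := by
          rw [integral_add (hgint.const_mul _) (integrable_const _), integral_const_mul,
            integral_const]
          simp
      _ ≤ 2 ^ s * (2 * θ0 ^ (2*s)) + 2 ^ s := by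
          have : (0:ℝ) ≤ 2 ^ s := by positivity
          nlinarith [mul_le_mul_of_nonneg_left hgbd this]
      _ ≤ θ ^ s := by
          rw [hθdef, mul_pow, ← pow_mul]
          have h2s : (0:ℝ) < 2 ^ s := by positivity
          have h6s : (6:ℝ) ^ s = 2 ^ s * 3 ^ s := by
            rw [← mul_pow]; norm_num
          rw [mul_comm 2 s]
          rw [mul_comm 2 s] at hθ0s
          have hx : (0:ℝ) ≤ 2 ^ s * θ0 ^ (s*2) := by positivity
          nlinarith [mul_le_mul_of_nonneg_right h3s hx,
            mul_le_mul_of_nonneg_left hθ0s h2s.le]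
  -- moments of all W i
  have hmomI : ∀ i s, s ≤ 2*(3*k) → Integrable (fun ω => |W i ω| ^ s) M.P := by
    intro i s hs
    have hψ : Measurable (fun x : ℝ => |x ^ 2 / M.lam j - 1| ^ s) :=
      (((measurable_id.pow_const 2).div_const _).sub_const 1).abs.pow_const s
    exact htransI _ hψ i ((hW0 s (by omega)).1)
  have hmomB : ∀ i s, s ≤ 2*(3*k) → ∫ ω, |W i ω| ^ s ∂M.P ≤ θ ^ s := by
    intro i s hs
    have hψ : Measurable (fun x : ℝ => |x ^ 2 / M.lam j - 1| ^ s) :=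
      (((measurable_id.pow_const 2).div_const _).sub_const 1).abs.pow_const s
    have := htransE _ hψ i
    exact le_trans (le_of_eq this) ((hW0 s (by omega)).2)
  -- centering
  have hmean : ∀ i, ∫ ω, W i ω ∂M.P = 0 := by
    have hZint : Integrable (fun ω => (M.Xc 0 j ω) ^ 2 / M.lam j) M.P := by
      have h2 := (hinterp 2 (by omega)).1
      have heq : (fun ω => |M.Xc 0 j ω / Real.sqrt (M.lam j)| ^ 2)
          = fun ω => (M.Xc 0 j ω) ^ 2 / M.lam j := funext fun ω => hgsq _
      rwa [heq] at h2
    have h0 : ∫ ω, W 0 ω ∂M.P = 0 := by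
      rw [hWdef]
      simp only []
      rw [integral_sub hZint (integrable_const 1), integral_const, integral_div,
        M.Xc_var j hj]
      simp [div_self hlam.ne']
    intro i
    have hψ : Measurable (fun x : ℝ => x ^ 2 / M.lam j - 1) :=
      ((measurable_id.pow_const 2).div_const _).sub_const 1
    exact (htransE _ hψ i).trans h0
  -- rosenthal bounds
  have hros2 := rosenthal (m := 3*k) hθ1 hWm hind hmean hmomI hmomB k (by omega) n
  have hros6 := rosenthal (m := 3*k) hθ1 hWm hind hmean hmomI hmomB (3*k) (le_refl _) n
  have hSint : ∀ r ≤ 6*k,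
      Integrable (fun ω => (∑ i ∈ Finset.range n, W i ω) ^ r) M.P :=
    fun r hr => sum_pow_integrable hWm hind
      (fun i s hs => hmomI i s (by omega)) n r hr
  have hSintabs : ∀ r ≤ 6*k,
      Integrable (fun ω => |∑ i ∈ Finset.range n, W i ω| ^ r) M.P := by
    intro r hr
    have := (hSint r hr).abs
    simpa [abs_pow] using this
  set S : M.Ω → ℝ := fun ω => ∑ i ∈ Finset.range n, W i ω with hSdef
  have hSm : Measurable S := Finset.measurable_sum _ (fun i _ => hWm i)
  have hlhm : Measurable (M.lamhat n j) := by
    unfold Model.lamhat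
    exact (Finset.measurable_sum _ (fun i _ => (M.meas_Xc i j).pow_const 2)).const_mul _
  have hNk0 : (0:ℝ) < (n:ℝ) ^ k := by positivity
  have hptT : ∀ ω, M.lamhat n j ω / M.lam j - 1 = (n:ℝ)⁻¹ * S ω := by
    intro ω
    rw [hSdef]
    simp only [Model.lamhat, hWdef]
    rw [Finset.sum_sub_distrib, Finset.sum_const, Finset.card_range, nsmul_eq_mul, mul_one,
      ← Finset.sum_div]
    field_simp
  set c1 : ℝ := 4 ^ k * ((n:ℝ)⁻¹) ^ (2*k) with hc1
  set c2 : ℝ := ((n:ℝ) * M.lam j + 1) ^ (2*k) * (2 ^ (6*k) * ((n:ℝ)⁻¹) ^ (6*k)) with hc2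
  have hc1p : (0:ℝ) ≤ c1 := by rw [hc1]; positivity
  have hc2p : (0:ℝ) ≤ c2 := by rw [hc2]; positivity
  -- pointwise domination
  have hmono : ∀ ω, (if 1 / (n : ℝ) ≤ M.lamhat n j ω
      then |M.lam j / M.lamhat n j ω - 1| ^ (2 * k) else 0)
      ≤ c1 * |S ω| ^ (2*k) + c2 * |S ω| ^ (6*k) := by
    intro ω
    have h := ptwise_bound k hlam hn1 (hptT ω)
    have habs : |(n:ℝ)⁻¹ * S ω| = (n:ℝ)⁻¹ * |S ω| := by
      rw [abs_mul, abs_of_nonneg (by positivity : (0:ℝ) ≤ (n:ℝ)⁻¹)]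
    rw [habs, mul_pow, mul_pow] at h
    refine le_trans h (le_of_eq ?_)
    rw [hc1, hc2]
    ring
  -- integrability of the left-hand side
  have hLHSm : Measurable (fun ω => if 1 / (n : ℝ) ≤ M.lamhat n j ω
      then |M.lam j / M.lamhat n j ω - 1| ^ (2 * k) else 0) :=
    Measurable.ite (measurableSet_le measurable_const hlhm)
      (((measurable_const.div hlhm).sub_const 1).abs.pow_const (2*k)) measurable_const
  have hLHSb : ∀ ω, ‖if 1 / (n : ℝ) ≤ M.lamhat n j ω
      then |M.lam j / M.lamhat n j ω - 1| ^ (2 * k) else 0‖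
      ≤ ((n:ℝ) * M.lam j + 1) ^ (2*k) := by
    intro ω
    split_ifs with h
    · have hlh : (0:ℝ) < M.lamhat n j ω := lt_of_lt_of_le (by positivity) h
      have h1 : (1:ℝ) ≤ (n:ℝ) * M.lamhat n j ω := by
        rw [div_le_iff₀ hn0] at h
        calc (1:ℝ) ≤ M.lamhat n j ω * (n:ℝ) := h
          _ = (n:ℝ) * M.lamhat n j ω := by ring
      have h2 : M.lam j / M.lamhat n j ω ≤ (n:ℝ) * M.lam j := by
        rw [div_le_iff₀ hlh]
        calc M.lam j = M.lam j * 1 := (mul_one _).symm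
          _ ≤ M.lam j * ((n:ℝ) * M.lamhat n j ω) :=
            mul_le_mul_of_nonneg_left h1 hlam.le
          _ = (n:ℝ) * M.lam j * M.lamhat n j ω := by ring
      have h3 : |M.lam j / M.lamhat n j ω - 1| ≤ (n:ℝ) * M.lam j + 1 := by
        have h4 : (0:ℝ) ≤ M.lam j / M.lamhat n j ω := by positivity
        rw [abs_le]
        constructor <;> linarith
      rw [Real.norm_eq_abs, abs_of_nonneg (by positivity)]
      exact pow_le_pow_left₀ (abs_nonneg _) h3 _
    · rw [norm_zero]
      positivity
  have hLHSint : Integrable (fun ω => if 1 / (n : ℝ) ≤ M.lamhat n j ω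
      then |M.lam j / M.lamhat n j ω - 1| ^ (2 * k) else 0) M.P :=
    (integrable_const (((n:ℝ) * M.lam j + 1) ^ (2*k))).mono'
      hLHSm.aestronglyMeasurable (MeasureTheory.ae_of_all _ hLHSb)
  have hGint2 := hSintabs (2*k) (by omega)
  have hGint6 := hSintabs (6*k) (le_refl _)
  have hGint : Integrable (fun ω => c1 * |S ω| ^ (2*k) + c2 * |S ω| ^ (6*k)) M.P :=
    (hGint2.const_mul c1).add (hGint6.const_mul c2)
  have hstep1 : ∫ ω, (if 1 / (n : ℝ) ≤ M.lamhat n j ω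
      then |M.lam j / M.lamhat n j ω - 1| ^ (2 * k) else 0) ∂M.P
      ≤ c1 * (∫ ω, |S ω| ^ (2*k) ∂M.P) + c2 * (∫ ω, |S ω| ^ (6*k) ∂M.P) := by
    calc _ ≤ ∫ ω, (c1 * |S ω| ^ (2*k) + c2 * |S ω| ^ (6*k)) ∂M.P :=
          integral_mono hLHSint hGint hmono
      _ = _ := by
          rw [integral_add (hGint2.const_mul c1) (hGint6.const_mul c2),
            integral_const_mul, integral_const_mul]
  -- power-of-η computations
  have hη0 : (0:ℝ) ≤ η := by linarith
  have hkR : ((12*k : ℕ) : ℝ) ≠ 0 := Nat.cast_ne_zero.mpr (by omega)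
  have hθ04k : θ0 ^ (4*k) ≤ η := by
    rw [hθ0def, ← Real.rpow_natCast (η ^ ((1:ℝ)/((12*k : ℕ) : ℝ))) (4*k),
      ← Real.rpow_mul hη0]
    have he : (1:ℝ)/((12*k : ℕ) : ℝ) * ((4*k : ℕ) : ℝ) = 1/3 := by
      push_cast
      have : (k:ℝ) ≠ 0 := Nat.cast_ne_zero.mpr (by omega)
      field_simp
      ring
    rw [he]
    calc η ^ ((1:ℝ)/3) ≤ η ^ (1:ℝ) := Real.rpow_le_rpow_of_exponent_le hη (by norm_num)
      _ = η := Real.rpow_one η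
  have hθ012k : θ0 ^ (12*k) = η := by
    rw [hθ0def, ← Real.rpow_natCast (η ^ ((1:ℝ)/((12*k : ℕ) : ℝ))) (12*k),
      ← Real.rpow_mul hη0]
    rw [show (1:ℝ)/((12*k : ℕ) : ℝ) * ((12*k : ℕ) : ℝ) = 1 from by field_simp]
    exact Real.rpow_one η
  have hθ2k : θ ^ (2*k) ≤ 6 ^ (2*k) * η := by
    rw [hθdef, mul_pow, ← pow_mul]
    have : 2 * (2*k) = 4*k := by ring
    rw [this]
    exact mul_le_mul_of_nonneg_left hθ04k (by positivity)
  have hθ6k : θ ^ (6*k) = 6 ^ (6*k) * η := by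
    rw [hθdef, mul_pow, ← pow_mul]
    rw [show 2 * (6*k) = 12*k from by ring, hθ012k]
  -- n-power identities
  have hNk : ((n:ℝ) ^ k) ≠ 0 := ne_of_gt hNk0
  have hN0 : (n:ℝ) ≠ 0 := ne_of_gt hn0
  have i1 : ((n:ℝ)⁻¹) ^ (2*k) * (n:ℝ) ^ k = ((n:ℝ) ^ k)⁻¹ := by
    rw [inv_pow, show 2*k = k + k from by ring, pow_add, mul_inv, mul_assoc,
      inv_mul_cancel₀ hNk, mul_one]
  have i2 : (n:ℝ) ^ (2*k) * (((n:ℝ)⁻¹) ^ (6*k) * (n:ℝ) ^ (3*k)) = ((n:ℝ) ^ k)⁻¹ := by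
    rw [inv_pow]
    rw [show 6*k = 2*k + (3*k + k) from by ring, pow_add, pow_add]
    field_simp
  -- putting everything together
  have hT1 : c1 * (4 ^ (k*k) * θ ^ (2*k) * (n:ℝ) ^ k)
      ≤ 4 ^ (k + k*k) * 6 ^ (2*k) * η * ((n:ℝ) ^ k)⁻¹ := by
    have e : c1 * (4 ^ (k*k) * θ ^ (2*k) * (n:ℝ) ^ k)
        = (4 ^ (k + k*k) : ℝ) * θ ^ (2*k) * (((n:ℝ)⁻¹) ^ (2*k) * (n:ℝ) ^ k) := by
      rw [hc1, pow_add]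
      ring
    rw [e, i1]
    calc (4 ^ (k + k*k) : ℝ) * θ ^ (2*k) * ((n:ℝ) ^ k)⁻¹
        ≤ (4 ^ (k + k*k) : ℝ) * (6 ^ (2*k) * η) * ((n:ℝ) ^ k)⁻¹ := by
          refine mul_le_mul_of_nonneg_right
            (mul_le_mul_of_nonneg_left hθ2k (by positivity)) (by positivity)
      _ = 4 ^ (k + k*k) * 6 ^ (2*k) * η * ((n:ℝ) ^ k)⁻¹ := by ring
  have hA1 : (1:ℝ) ≤ M.lam j ^ (2*k) + 1 := by
    linarith [pow_nonneg hlam.le (2*k)]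
  have hT2 : c2 * (4 ^ (9*(k*k)) * θ ^ (6*k) * (n:ℝ) ^ (3*k))
      ≤ 2 ^ (8*k) * 4 ^ (9*(k*k)) * 6 ^ (6*k) * η * (M.lam j ^ (2*k) + 1)
        * ((n:ℝ) ^ k)⁻¹ := by
    have hbinom : ((n:ℝ) * M.lam j + 1) ^ (2*k)
        ≤ 2 ^ (2*k) * ((n:ℝ) ^ (2*k) * (M.lam j ^ (2*k) + 1)) := by
      have h1 := add_pow_le2 (by positivity : (0:ℝ) ≤ (n:ℝ) * M.lam j)
        (by norm_num : (0:ℝ) ≤ (1:ℝ)) (2*k)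
      rw [mul_pow, one_pow] at h1
      have h2 : (1:ℝ) ≤ (n:ℝ) ^ (2*k) := one_le_pow₀ hn1
      have h3 : (n:ℝ) ^ (2*k) * M.lam j ^ (2*k) + 1
          ≤ (n:ℝ) ^ (2*k) * (M.lam j ^ (2*k) + 1) := by nlinarith
      calc ((n:ℝ) * M.lam j + 1) ^ (2*k)
          ≤ 2 ^ (2*k) * ((n:ℝ) ^ (2*k) * M.lam j ^ (2*k) + 1) := h1
        _ ≤ 2 ^ (2*k) * ((n:ℝ) ^ (2*k) * (M.lam j ^ (2*k) + 1)) := by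
            exact mul_le_mul_of_nonneg_left h3 (by positivity)
    have e : c2 * (4 ^ (9*(k*k)) * θ ^ (6*k) * (n:ℝ) ^ (3*k))
        = ((n:ℝ) * M.lam j + 1) ^ (2*k)
          * (2 ^ (6*k) * 4 ^ (9*(k*k)) * θ ^ (6*k)
            * (((n:ℝ)⁻¹) ^ (6*k) * (n:ℝ) ^ (3*k))) := by
      rw [hc2]
      ring
    rw [e]
    have hfac : (0:ℝ) ≤ 2 ^ (6*k) * 4 ^ (9*(k*k)) * θ ^ (6*k)
        * (((n:ℝ)⁻¹) ^ (6*k) * (n:ℝ) ^ (3*k)) := by positivity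
    calc ((n:ℝ) * M.lam j + 1) ^ (2*k)
          * (2 ^ (6*k) * 4 ^ (9*(k*k)) * θ ^ (6*k)
            * (((n:ℝ)⁻¹) ^ (6*k) * (n:ℝ) ^ (3*k)))
        ≤ (2 ^ (2*k) * ((n:ℝ) ^ (2*k) * (M.lam j ^ (2*k) + 1)))
          * (2 ^ (6*k) * 4 ^ (9*(k*k)) * θ ^ (6*k)
            * (((n:ℝ)⁻¹) ^ (6*k) * (n:ℝ) ^ (3*k))) :=
          mul_le_mul_of_nonneg_right hbinom hfac
      _ = 2 ^ (2*k) * 2 ^ (6*k) * 4 ^ (9*(k*k)) * θ ^ (6*k) * (M.lam j ^ (2*k) + 1)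
          * ((n:ℝ) ^ (2*k) * (((n:ℝ)⁻¹) ^ (6*k) * (n:ℝ) ^ (3*k))) := by ring
      _ = 2 ^ (8*k) * 4 ^ (9*(k*k)) * 6 ^ (6*k) * η * (M.lam j ^ (2*k) + 1)
          * ((n:ℝ) ^ k)⁻¹ := by
          rw [i2, hθ6k, ← pow_add]
          rw [show 2*k + 6*k = 8*k from by ring]
          ring
  calc ∫ ω, (if 1 / (n : ℝ) ≤ M.lamhat n j ω
        then |M.lam j / M.lamhat n j ω - 1| ^ (2 * k) else 0) ∂M.P
      ≤ c1 * (∫ ω, |S ω| ^ (2*k) ∂M.P) + c2 * (∫ ω, |S ω| ^ (6*k) ∂M.P) := hstep1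
    _ ≤ c1 * (4 ^ (k*k) * θ ^ (2*k) * (n:ℝ) ^ k)
        + c2 * (4 ^ (9*(k*k)) * θ ^ (6*k) * (n:ℝ) ^ (3*k)) := by
        have h2 : ∫ ω, |S ω| ^ (2*k) ∂M.P ≤ 4 ^ (k*k) * θ ^ (2*k) * (n:ℝ) ^ k := hros2
        have h6 : ∫ ω, |S ω| ^ (6*k) ∂M.P
            ≤ 4 ^ (9*(k*k)) * θ ^ (6*k) * (n:ℝ) ^ (3*k) := by
          have := hros6
          rw [show 2*(3*k) = 6*k from by ring, show 3*k*(3*k) = 9*(k*k) from by ring] at this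
          exact this
        exact add_le_add (mul_le_mul_of_nonneg_left h2 hc1p)
          (mul_le_mul_of_nonneg_left h6 hc2p)
    _ ≤ 4 ^ (k + k*k) * 6 ^ (2*k) * η * ((n:ℝ) ^ k)⁻¹
        + 2 ^ (8*k) * 4 ^ (9*(k*k)) * 6 ^ (6*k) * η * (M.lam j ^ (2*k) + 1)
          * ((n:ℝ) ^ k)⁻¹ := add_le_add hT1 hT2
    _ ≤ (4 ^ (k + k*k) * 6 ^ (2*k) + 2 ^ (8*k) * 4 ^ (9*(k*k)) * 6 ^ (6*k)) * η
        * (M.lam j ^ (2*k) + 1) / (n:ℝ) ^ k := by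
        rw [div_eq_mul_inv]
        have h1 : 4 ^ (k + k*k) * 6 ^ (2*k) * η * ((n:ℝ) ^ k)⁻¹
            ≤ 4 ^ (k + k*k) * 6 ^ (2*k) * η * (M.lam j ^ (2*k) + 1) * ((n:ℝ) ^ k)⁻¹ := by
          have : (0:ℝ) ≤ 4 ^ (k + k*k) * 6 ^ (2*k) * η * ((n:ℝ) ^ k)⁻¹ := by positivity
          nlinarith
        nlinarith [h1]

end CircularFLM
end
end
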